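/- arXiv:2311.18796 — 10 statements merged into one kernel-verified Lean document; each statement's English description precedes it below -/
import Mathlib

section
/- If n is sufficiently large, then every 2-coloring of {2,...,n} contains a monochromatic product Schur triple, i.e., elements a, b, c (not necessarily distinct) of the same color with a*b = c. -/
/-- If `n` is sufficiently large, every 2-colouring of `{2,...,n}` contains a
monochromatic product Schur triple. -/
theorem stmt0 :
    ∃ N : ℕ, ∀ n : ℕ, N ≤ n → ∀ χ : ℕ → Fin 2,
      ∃ a ∈ Finset.Icc 2 n, ∃ b ∈ Finset.Icc 2 n, ∃ c ∈ Finset.Icc 2 n,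
        a * b = c ∧ χ a = χ b ∧ χ b = χ c := by
  refine ⟨32, fun n hn χ => ?_⟩
  have mem : ∀ k, 2 ≤ k → k ≤ 32 → k ∈ Finset.Icc 2 n :=
    fun k h1 h2 => Finset.mem_Icc.2 ⟨h1, le_trans h2 hn⟩
  have key : ∀ a b c : ℕ, 2 ≤ a → 2 ≤ b → 2 ≤ c → c ≤ 32 → a * b = c →
      χ a = χ b → χ b = χ c →
      ∃ a ∈ Finset.Icc 2 n, ∃ b ∈ Finset.Icc 2 n, ∃ c ∈ Finset.Icc 2 n,
        a * b = c ∧ χ a = χ b ∧ χ b = χ c := by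
    intro a b c ha hb hc hc32 habc h1 h2
    exact ⟨a, mem a ha (by nlinarith), b, mem b hb (by nlinarith), c, mem c hc hc32,
      habc, h1, h2⟩
  have two : ∀ x y z : Fin 2, x ≠ y → z ≠ y → x = z := by decide
  by_cases H24 : χ 2 = χ 4
  · exact key 2 2 4 (by norm_num) (by norm_num) (by norm_num) (by norm_num) rfl rfl H24
  by_cases H416 : χ 4 = χ 16
  · exact key 4 4 16 (by norm_num) (by norm_num) (by norm_num) (by norm_num) rfl rfl H416
  have H216 : χ 2 = χ 16 := two _ _ _ H24 (fun h => H416 h.symm)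
  by_cases H48 : χ 4 = χ 8
  · by_cases H432 : χ 4 = χ 32
    · exact key 4 8 32 (by norm_num) (by norm_num) (by norm_num) (by norm_num) rfl H48
        (H48.symm.trans H432)
    · -- χ 32 = χ 2 side: 2 * 16 = 32, need χ 16 = χ 32
      have H232 : χ 2 = χ 32 := two _ _ _ H24 (fun h => H432 h.symm)
      exact key 2 16 32 (by norm_num) (by norm_num) (by norm_num) (by norm_num) rfl H216
        (H216.symm.trans H232)
  · -- χ 8 = χ 2 = χ 16, use 2 * 8 = 16
    have H28 : χ 2 = χ 8 := two _ _ _ H24 (fun h => H48 h.symm)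
    exact key 2 8 16 (by norm_num) (by norm_num) (by norm_num) (by norm_num) rfl H28
      (H28.symm.trans H216)
end

section
/- For every ε > 0 there exists N such that for all n ≥ N, every integer m with 2 ≤ m ≤ n has at most n^ε divisors. -/
open Finset

/-- Per-prime-power bound: `a+1 ≤ k·p^(a/k)` for small primes, `p^(a/k)` for primes `≥ 2^k`. -/
lemma pp_bound (k p a : ℕ) (hk : 2 ≤ k) (hp : 2 ≤ p) :
    ((a + 1 : ℕ) : ℝ) ≤ (if p < 2 ^ k then (k : ℝ) else 1) * (p : ℝ) ^ ((a : ℝ) / k) := by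
  have hk0 : (0:ℝ) < (k:ℝ) := by positivity
  have hka : (0:ℝ) ≤ (a : ℝ) / k := by positivity
  have hp2 : (2:ℝ) ≤ (p:ℝ) := by exact_mod_cast hp
  by_cases hlt : p < 2 ^ k
  · simp only [hlt, if_pos]
    have h1 : a + 1 ≤ k * (a / k + 1) := by
      nlinarith [Nat.div_add_mod a k, Nat.mod_lt a (show 0 < k by omega)]
    have h2 : a / k + 1 ≤ 2 ^ (a / k) := Nat.lt_two_pow_self (n := a / k)
    have h3 : ((a + 1 : ℕ) : ℝ) ≤ (k : ℝ) * (2:ℝ) ^ (a / k : ℕ) := by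
      have : a + 1 ≤ k * 2 ^ (a / k) := h1.trans (Nat.mul_le_mul_left _ h2)
      exact_mod_cast this
    refine h3.trans (mul_le_mul_of_nonneg_left ?_ hk0.le)
    have h4 : (2:ℝ) ^ (a / k : ℕ) = (2:ℝ) ^ ((a / k : ℕ) : ℝ) := (Real.rpow_natCast 2 _).symm
    rw [h4]
    calc (2:ℝ) ^ ((a / k : ℕ) : ℝ) ≤ (2:ℝ) ^ ((a:ℝ)/k) :=
          Real.rpow_le_rpow_of_exponent_le one_le_two Nat.cast_div_le
      _ ≤ (p:ℝ) ^ ((a:ℝ)/k) := Real.rpow_le_rpow (by norm_num) hp2 hka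
  · rw [if_neg hlt, one_mul]
    rw [not_lt] at hlt
    have h1 : ((a + 1 : ℕ) : ℝ) ≤ (2:ℝ) ^ (a : ℕ) := by
      exact_mod_cast (Nat.lt_two_pow_self (n := a) : a + 1 ≤ 2 ^ a)
    refine h1.trans ?_
    have h2 : (2:ℝ) ^ (a : ℕ) = ((2:ℝ) ^ ((k:ℕ):ℝ)) ^ ((a:ℝ)/k) := by
      rw [← Real.rpow_natCast 2 a, ← Real.rpow_mul (by norm_num)]
      congr 1
      field_simp
    rw [h2]
    refine Real.rpow_le_rpow (by positivity) ?_ hka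
    calc (2:ℝ) ^ ((k:ℕ):ℝ) = ((2 ^ k : ℕ) : ℝ) := by
          rw [Real.rpow_natCast]; push_cast; ring
      _ ≤ (p:ℝ) := by exact_mod_cast hlt

/-- `d(m) ≤ k^(2^k) · m^(1/k)` for `k ≥ 2`. -/
lemma divisor_bound (k m : ℕ) (hk : 2 ≤ k) (hm : m ≠ 0) :
    (m.divisors.card : ℝ) ≤ (k : ℝ) ^ (2 ^ k) * (m : ℝ) ^ ((1:ℝ) / k) := by
  have hk0 : (0:ℝ) < (k:ℝ) := by positivity
  rw [Nat.card_divisors hm]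
  push_cast
  have step1 : (∏ p ∈ m.primeFactors, ((m.factorization p : ℝ) + 1)) ≤
      ∏ p ∈ m.primeFactors,
        (if p < 2 ^ k then (k : ℝ) else 1) * (p : ℝ) ^ ((m.factorization p : ℝ) / k) := by
    refine Finset.prod_le_prod (fun p _ => by positivity) (fun p hp => ?_)
    have := pp_bound k p (m.factorization p) hk (Nat.prime_of_mem_primeFactors hp).two_le
    push_cast at this
    exact this
  refine step1.trans ?_
  rw [Finset.prod_mul_distrib]
  have hA : (∏ p ∈ m.primeFactors, if p < 2 ^ k then (k : ℝ) else 1) ≤ (k:ℝ) ^ (2 ^ k) := by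
    rw [← Finset.prod_filter]
    rw [Finset.prod_const]
    have hcard : (m.primeFactors.filter (· < 2 ^ k)).card ≤ 2 ^ k := by
      have : (m.primeFactors.filter (· < 2 ^ k)) ⊆ Finset.range (2 ^ k) := by
        intro p hp
        simp only [Finset.mem_filter] at hp
        exact Finset.mem_range.mpr hp.2
      simpa using Finset.card_le_card this
    exact pow_le_pow_right₀ (by exact_mod_cast hk.trans' (by norm_num) : (1:ℝ) ≤ k) hcard
  have hB : (∏ p ∈ m.primeFactors, (p : ℝ) ^ ((m.factorization p : ℝ) / k)) =
      (m : ℝ) ^ ((1:ℝ) / k) := by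
    have h1 : ∀ p ∈ m.primeFactors, (p : ℝ) ^ ((m.factorization p : ℝ) / k) =
        ((p : ℝ) ^ (m.factorization p : ℕ)) ^ ((1:ℝ) / k) := by
      intro p _
      rw [← Real.rpow_natCast (p:ℝ) (m.factorization p), ← Real.rpow_mul (by positivity)]
      congr 1
      ring
    rw [Finset.prod_congr rfl h1,
      Real.finset_prod_rpow _ _ (fun p _ => by positivity)]
    congr 1
    have h2 : (∏ p ∈ m.primeFactors, p ^ m.factorization p) = m := by
      rw [← Nat.prod_factorization_eq_prod_primeFactors]
      exact Nat.factorization_prod_pow_eq_self hm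
    exact_mod_cast congrArg (Nat.cast : ℕ → ℝ) h2
  rw [hB]
  have hmpos : (0:ℝ) ≤ (m : ℝ) ^ ((1:ℝ) / k) := by positivity
  exact mul_le_mul_of_nonneg_right hA hmpos

/-- For every `ε > 0` there is `N` such that for all `n ≥ N` every `2 ≤ m ≤ n`
has at most `n^ε` divisors. -/
theorem stmt4 (ε : ℝ) (hε : 0 < ε) :
    ∃ N : ℕ, ∀ n : ℕ, N ≤ n → ∀ m : ℕ, 2 ≤ m → m ≤ n →
      (m.divisors.card : ℝ) ≤ (n : ℝ) ^ ε := by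
  set k : ℕ := ⌈2 / ε⌉₊ + 2 with hkdef
  have hk2 : 2 ≤ k := by omega
  have hk0 : (0:ℝ) < (k:ℝ) := by positivity
  have hkε : (1:ℝ) / k ≤ ε / 2 := by
    have h1 : 2 / ε ≤ (k : ℝ) := by
      calc 2 / ε ≤ (⌈2 / ε⌉₊ : ℝ) := Nat.le_ceil _
        _ ≤ (k : ℝ) := by exact_mod_cast Nat.le_add_right _ 2
    rw [div_le_div_iff₀ hk0 (by norm_num)]
    rw [div_le_iff₀ hε] at h1
    nlinarith
  set C : ℝ := (k : ℝ) ^ (2 ^ k) with hCdef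
  have hC1 : (1:ℝ) ≤ C := one_le_pow₀ (by exact_mod_cast hk2.trans' (by norm_num) : (1:ℝ) ≤ (k:ℝ))
  refine ⟨⌈C ^ (2 / ε)⌉₊ + 1, fun n hn m hm2 hmn => ?_⟩
  have hn1 : 1 ≤ n := by omega
  have hn0 : (0:ℝ) < (n:ℝ) := by exact_mod_cast Nat.lt_of_lt_of_le Nat.zero_lt_one hn1
  have hn1' : (1:ℝ) ≤ (n:ℝ) := by exact_mod_cast hn1
  have hnC : C ^ (2 / ε) ≤ (n : ℝ) := by
    calc C ^ (2 / ε) ≤ (⌈C ^ (2 / ε)⌉₊ : ℝ) := Nat.le_ceil _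
      _ ≤ (n : ℝ) := by exact_mod_cast Nat.le_of_succ_le hn
  -- C ≤ n ^ (ε/2)
  have hCn : C ≤ (n : ℝ) ^ (ε / 2) := by
    have h1 : (C ^ (2 / ε)) ^ (ε / 2) ≤ (n : ℝ) ^ (ε / 2) :=
      Real.rpow_le_rpow (by positivity) hnC (by positivity)
    calc C = (C ^ (2 / ε)) ^ (ε / 2) := by
          rw [← Real.rpow_mul (by linarith), div_mul_div_comm]
          norm_num
          rw [mul_comm, div_self (by positivity), Real.rpow_one]
      _ ≤ (n : ℝ) ^ (ε / 2) := h1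
  have hd := divisor_bound k m hk2 (by omega)
  refine hd.trans ?_
  have hmn' : (m : ℝ) ^ ((1:ℝ)/k) ≤ (n : ℝ) ^ (ε / 2) := by
    calc (m : ℝ) ^ ((1:ℝ)/k) ≤ (n : ℝ) ^ ((1:ℝ)/k) :=
          Real.rpow_le_rpow (by positivity) (by exact_mod_cast hmn) (by positivity)
      _ ≤ (n : ℝ) ^ (ε / 2) := Real.rpow_le_rpow_of_exponent_le hn1' hkε
  calc C * (m : ℝ) ^ ((1:ℝ)/k) ≤ (n : ℝ) ^ (ε/2) * (n : ℝ) ^ (ε/2) :=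
        mul_le_mul hCn hmn' (by positivity) (by positivity)
    _ = (n : ℝ) ^ ε := by rw [← Real.rpow_add hn0]; norm_num
end

section
/- For sufficiently large n, every subset A of {2,...,n} with |A| ≥ n - √n/2 contains at least n/8 triples (a,b,c) ∈ A³ with a*b = c. -/
open Finset

private lemma recip_pack (C : Finset ℕ) : ∀ (k : ℕ), 1 ≤ k → (∀ a ∈ C, k ≤ a) →
    ∑ a ∈ C, (1:ℝ)/a ≤ ∑ i ∈ Finset.Ico k (k + C.card), (1:ℝ)/i := by
  induction C using Finset.induction_on_min with
  | empty => intro k _ _; simp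
  | insert a Cs ha ih =>
    intro k hk hmem
    have haC : a ∉ Cs := fun h => lt_irrefl a (ha a h)
    rw [Finset.sum_insert haC, Finset.card_insert_of_notMem haC]
    have hka : k ≤ a := hmem a (Finset.mem_insert_self _ _)
    have h1 := ih (k+1) (by omega) (fun b hb => by have := ha b hb; omega)
    have h2 : (1:ℝ)/a ≤ 1/k := by
      apply one_div_le_one_div_of_le
      · exact_mod_cast hk
      · exact_mod_cast hka
    rw [Finset.sum_eq_sum_Ico_succ_bot (by omega : k < k + (Cs.card + 1))]
    have he : k + 1 + Cs.card = k + (Cs.card + 1) := by omega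
    rw [he] at h1
    linarith

private lemma log_le_recip_sum (k : ℕ) (hk : 1 ≤ k) (K : ℕ) :
    Real.log K - Real.log k ≤ ∑ i ∈ Finset.Ico k K, (1:ℝ)/i := by
  induction K with
  | zero =>
    rw [Finset.Ico_eq_empty (by omega)]
    simp only [Nat.cast_zero, Real.log_zero, Finset.sum_empty]
    have : (0:ℝ) ≤ Real.log k := Real.log_nonneg (by exact_mod_cast hk)
    linarith
  | succ K ih =>
    by_cases h : K < k
    · rw [Finset.Ico_eq_empty (by omega)]
      simp only [Finset.sum_empty]
      have h1 : Real.log (K+1:ℕ) ≤ Real.log k := by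
        apply Real.log_le_log (by positivity)
        exact_mod_cast h
      linarith
    · push_neg at h
      rw [Finset.sum_Ico_succ_top h]
      have hK0 : (0:ℝ) < K := by
        have : 1 ≤ K := le_trans hk h
        exact_mod_cast this
      have hlog := Real.log_le_sub_one_of_pos (show (0:ℝ) < ((K:ℝ)+1)/K by positivity)
      rw [Real.log_div (by positivity) (ne_of_gt hK0)] at hlog
      have he : ((K:ℝ)+1)/K - 1 = 1/K := by field_simp; ring
      rw [he] at hlog
      have hc : ((K+1:ℕ):ℝ) = (K:ℝ)+1 := by push_cast; ring
      rw [hc]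
      linarith


private lemma analytic_bound (r sm mm jj nn : ℝ) (hr1000 : 1000 ≤ r) (hr2 : nn = r^2)
    (hsr : sm ≤ r) (hrs1 : r < sm + 1) (hmr : mm ≤ r/2 - 1) (hm0 : 0 ≤ mm)
    (hj0 : 0 ≤ jj) (hjr : jj ≤ mm) :
    nn/8 ≤ nn * (Real.log (sm+1) - Real.log (jj+2)) - (sm-1-jj)*(2+2*mm) := by
  have hn0 : (0:ℝ) ≤ nn := by nlinarith
  have hb2 : (mm - jj)*(2+2*mm) ≤ nn * (Real.log (mm+2) - Real.log (jj+2)) := by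
    have hlogjm : (mm - jj)/(mm + 2) ≤ Real.log (mm+2) - Real.log (jj+2) := by
      have h := Real.log_le_sub_one_of_pos (show (0:ℝ) < (jj+2)/(mm+2) by positivity)
      rw [Real.log_div (by linarith) (by linarith)] at h
      have he : (jj+2)/(mm+2) - 1 = -((mm - jj)/(mm+2)) := by field_simp; ring
      rw [he] at h
      linarith
    have h1 : (mm+2)*(2+2*mm) ≤ nn := by nlinarith
    have h2 : (mm - jj)*(2+2*mm) ≤ nn * ((mm-jj)/(mm+2)) := by
      rw [mul_div_assoc', le_div_iff₀ (by linarith : (0:ℝ) < mm+2)]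
      nlinarith [mul_le_mul_of_nonneg_left h1 (show (0:ℝ) ≤ mm - jj by linarith)]
    have h3 := mul_le_mul_of_nonneg_left hlogjm hn0
    linarith
  have hlog1 : Real.log 2 - 2/r ≤ Real.log (sm+1) - Real.log (mm+2) := by
    have ha : Real.log r ≤ Real.log (sm+1) := Real.log_le_log (by linarith) (by linarith)
    have hb : Real.log (mm+2) ≤ Real.log ((r+2)/2) :=
      Real.log_le_log (by linarith) (by linarith)
    have hc : Real.log ((r+2)/2) = Real.log (r+2) - Real.log 2 :=
      Real.log_div (by linarith) two_ne_zero
    have hd : Real.log (r+2) - Real.log r ≤ 2/r := by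
      have h := Real.log_le_sub_one_of_pos (show (0:ℝ) < (r+2)/r by positivity)
      rw [Real.log_div (by linarith) (by linarith)] at h
      have he : (r+2)/r - 1 = 2/r := by field_simp; ring
      linarith
    linarith
  have hlog2 : (0.6931:ℝ) ≤ Real.log 2 := by
    have := Real.log_two_gt_d9; linarith
  have hloss : (sm - 1 - mm)*(2+2*mm) ≤ (r+1)^2/2 := by
    nlinarith [sq_nonneg (sm+1 - 2*(mm+2))]
  have h2r : nn * (2/r) = 2*r := by
    rw [hr2]; field_simp
  have e1 : nn * (Real.log 2 - 2/r) ≤ nn * (Real.log (sm+1) - Real.log (mm+2)) :=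
    mul_le_mul_of_nonneg_left hlog1 hn0
  have hmul2 : nn * (Real.log 2 - 2/r) = nn*Real.log 2 - 2*r := by
    rw [mul_sub, h2r]
  nlinarith [hb2, e1, hloss, hlog2, hr1000, hr2]


/-- For sufficiently large `n`, every `A ⊆ {2,...,n}` with `|A| ≥ n - √n/2` contains at
least `n/8` triples `(a,b,c) ∈ A³` with `a*b = c`. -/
theorem stmt5 :
    ∃ N : ℕ, ∀ n : ℕ, N ≤ n → ∀ A : Finset ℕ, A ⊆ Finset.Icc 2 n →
      (n : ℝ) - Real.sqrt n / 2 ≤ A.card →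
      (n : ℝ) / 8 ≤ ((A ×ˢ A ×ˢ A).filter
        (fun t : ℕ × ℕ × ℕ => t.1 * t.2.1 = t.2.2)).card := by
  refine ⟨1000000, ?_⟩
  intro n hn A hA hcard
  set s := Nat.sqrt n with hs_def
  set M := Finset.Icc 2 n \ A with hM_def
  set m := M.card with hm_def
  set S := A.filter (fun a => a ≤ s) with hS_def
  set g : ℕ → ℕ := fun a => (A.filter (fun b => a * b ∈ A)).card with hg_def
  have hn0 : (0:ℝ) ≤ (n:ℝ) := by positivity
  set r := Real.sqrt (n:ℝ) with hr_def
  have hr2 : r^2 = (n:ℝ) := Real.sq_sqrt hn0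
  have hr1000 : (1000:ℝ) ≤ r := by
    have h1 : (1000:ℝ) = Real.sqrt 1000000 := by
      rw [show (1000000:ℝ) = 1000^2 by norm_num, Real.sqrt_sq (by norm_num)]
    rw [h1]
    exact Real.sqrt_le_sqrt (by exact_mod_cast hn)
  have hs1000 : 1000 ≤ s := by
    rw [hs_def]; rw [Nat.le_sqrt]; omega
  have hsn : s ≤ n := Nat.sqrt_le_self n
  have hsr : (s:ℝ) ≤ r := by
    rw [hr_def]
    rw [show ((s:ℕ):ℝ) = Real.sqrt ((s:ℝ)^2) from (Real.sqrt_sq (by positivity)).symm]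
    apply Real.sqrt_le_sqrt
    exact_mod_cast Nat.sqrt_le' n
  have hrs1 : r < (s:ℝ) + 1 := by
    rw [hr_def]
    have := Nat.lt_succ_sqrt' n
    have h2 : (n:ℝ) < ((s:ℝ)+1)^2 := by exact_mod_cast this
    nlinarith [Real.sq_sqrt hn0, Real.sqrt_nonneg (n:ℝ)]
  -- m bound
  have hAcard_le : A.card ≤ n - 1 := by
    have := Finset.card_le_card hA
    rw [Nat.card_Icc] at this; omega
  have hm_eq : m + A.card + 1 = n := by
    rw [hm_def, hM_def, Finset.card_sdiff_of_subset hA, Nat.card_Icc]; omega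
  have hmr : (m:ℝ) ≤ r/2 - 1 := by
    have h1 : (m:ℝ) + A.card + 1 = n := by exact_mod_cast hm_eq
    linarith
  have hm0 : (0:ℝ) ≤ (m:ℝ) := Nat.cast_nonneg m
  -- S facts
  have hSsub : S ⊆ Finset.Icc 2 s := by
    intro a haS
    rw [hS_def, Finset.mem_filter] at haS
    exact Finset.mem_Icc.mpr ⟨(Finset.mem_Icc.mp (hA haS.1)).1, haS.2⟩
  have hScard_le : S.card ≤ s - 1 := by
    have := Finset.card_le_card hSsub
    rw [Nat.card_Icc] at this; omega
  set j := s - 1 - S.card with hj_def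
  have hjm : j ≤ m := by
    have hsub : Finset.Icc 2 s \ S ⊆ M := by
      intro b hb
      rw [Finset.mem_sdiff, Finset.mem_Icc] at hb
      rw [hM_def, Finset.mem_sdiff, Finset.mem_Icc]
      refine ⟨⟨hb.1.1, le_trans hb.1.2 hsn⟩, fun hbA => hb.2 ?_⟩
      rw [hS_def, Finset.mem_filter]; exact ⟨hbA, hb.1.2⟩
    have := Finset.card_le_card hsub
    rw [Finset.card_sdiff_of_subset hSsub, Nat.card_Icc] at this
    omega
  -- per-a bound
  have hper : ∀ a ∈ S, (n:ℝ)/a - 2 - 2*m ≤ (g a : ℝ) := by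
    intro a haS
    have haS' := Finset.mem_filter.mp (hS_def ▸ haS)
    have haA : a ∈ A := haS'.1
    have ha2 : 2 ≤ a := (Finset.mem_Icc.mp (hA haA)).1
    have hsubset : Finset.Icc 2 (n/a) ⊆ (A.filter (fun b => a*b ∈ A)) ∪ M ∪
        ((Finset.Icc 2 (n/a)).filter (fun b => a*b ∈ M)) := by
      intro b hb
      have hb2 := Finset.mem_Icc.mp hb
      have hbn : b ≤ n := le_trans hb2.2 (Nat.div_le_self n a)
      by_cases hbA : b ∈ A
      · by_cases hab : a*b ∈ A
        · exact Finset.mem_union_left _ (Finset.mem_union_left _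
            (Finset.mem_filter.mpr ⟨hbA, hab⟩))
        · refine Finset.mem_union_right _ (Finset.mem_filter.mpr ⟨hb, ?_⟩)
          rw [hM_def, Finset.mem_sdiff]
          refine ⟨Finset.mem_Icc.mpr ⟨?_, ?_⟩, hab⟩
          · calc 2 ≤ a := ha2
              _ ≤ a * b := Nat.le_mul_of_pos_right a (by omega)
          · calc a * b ≤ a * (n/a) := Nat.mul_le_mul_left a hb2.2
              _ ≤ n := Nat.mul_div_le n a
      · refine Finset.mem_union_left _ (Finset.mem_union_right _ ?_)
        rw [hM_def, Finset.mem_sdiff]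
        exact ⟨Finset.mem_Icc.mpr ⟨hb2.1, hbn⟩, hbA⟩
    have hcard3 : ((Finset.Icc 2 (n/a)).filter (fun b => a*b ∈ M)).card ≤ m := by
      rw [hm_def]
      apply Finset.card_le_card_of_injOn (fun b => a*b)
      · intro b hb; exact (Finset.mem_filter.mp hb).2
      · intro b1 _ b2 _ he
        exact Nat.eq_of_mul_eq_mul_left (by omega) he
    have hNbound : n/a ≤ g a + 2*m + 1 := by
      have h1 := Finset.card_le_card hsubset
      have h2 := Finset.card_union_le ((A.filter (fun b => a*b ∈ A)) ∪ M)
        ((Finset.Icc 2 (n/a)).filter (fun b => a*b ∈ M))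
      have h3 := Finset.card_union_le (A.filter (fun b => a*b ∈ A)) M
      rw [Nat.card_Icc] at h1
      have : (A.filter (fun b => a*b ∈ A)).card = g a := by rw [hg_def]
      omega
    have hfloor : (n:ℝ)/a - 1 ≤ ((n/a : ℕ):ℝ) := by
      have hmod := Nat.div_add_mod n a
      have hlt : n % a < a := Nat.mod_lt _ (by omega)
      have hc : (n:ℝ) = a * ((n/a:ℕ):ℝ) + ((n % a : ℕ):ℝ) := by exact_mod_cast hmod.symm
      have hc2 : ((n % a : ℕ):ℝ) < (a:ℝ) := by exact_mod_cast hlt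
      have ha0 : (0:ℝ) < (a:ℝ) := by positivity
      rw [div_sub' (ne_of_gt ha0), div_le_iff₀ ha0]
      nlinarith
    have hgR : ((n/a : ℕ):ℝ) ≤ (g a:ℝ) + 2*m + 1 := by exact_mod_cast hNbound
    have ha0 : (0:ℝ) < (a:ℝ) := by positivity
    linarith
    -- injection into triples
  set Q := S.sigma (fun a => A.filter (fun b => a*b ∈ A)) with hQ_def
  have hQcard : Q.card = ∑ a ∈ S, g a := by
    rw [hQ_def, Finset.card_sigma]
  set T := ((A ×ˢ A ×ˢ A).filter (fun t : ℕ × ℕ × ℕ => t.1 * t.2.1 = t.2.2)) with hT_def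
  have hQT : Q.card ≤ T.card := by
    apply Finset.card_le_card_of_injOn (fun p => (p.1, p.2, p.1 * p.2))
    · intro p hp
      rw [hQ_def, Finset.mem_coe, Finset.mem_sigma] at hp
      have hp1A : p.1 ∈ A := (Finset.mem_filter.mp (hS_def ▸ hp.1)).1
      have hp2 := Finset.mem_filter.mp hp.2
      rw [hT_def, Finset.mem_coe, Finset.mem_filter, Finset.mem_product, Finset.mem_product]
      exact ⟨⟨hp1A, hp2.1, hp2.2⟩, rfl⟩
    · intro p _ q _ he
      simp only [Prod.mk.injEq] at he
      exact Sigma.ext he.1 (heq_of_eq he.2.1)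
  -- sum chain
  have hSc : (S.card:ℝ) = (s:ℝ) - 1 - (j:ℝ) := by
    have h1 : (S.card + j + 1 : ℕ) = s := by omega
    have h2 : ((S.card:ℝ) + (j:ℝ) + 1) = (s:ℝ) := by exact_mod_cast h1
    linarith
  have hsum3 : ∑ i ∈ Finset.Ico (j+2) (s+1), (1:ℝ)/i ≤ ∑ a ∈ S, 1/(a:ℝ) := by
    have hCs : (Finset.Icc 2 s \ S).card = j := by
      rw [Finset.card_sdiff_of_subset hSsub, Nat.card_Icc]; omega
    have hC := recip_pack (Finset.Icc 2 s \ S) 2 (by norm_num)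
      (fun a ha => (Finset.mem_Icc.mp (Finset.mem_sdiff.mp ha).1).1)
    rw [hCs, show 2 + j = j + 2 by omega] at hC
    have hsd : ∑ a ∈ Finset.Icc 2 s \ S, (1:ℝ)/a + ∑ a ∈ S, (1:ℝ)/a
        = ∑ a ∈ Finset.Icc 2 s, (1:ℝ)/a := Finset.sum_sdiff hSsub
    have hico : Finset.Icc 2 s = Finset.Ico 2 (s+1) := (Finset.Ico_add_one_right_eq_Icc 2 s).symm
    have hsplit : ∑ i ∈ Finset.Ico 2 (j+2), (1:ℝ)/i + ∑ i ∈ Finset.Ico (j+2) (s+1), (1:ℝ)/i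
        = ∑ i ∈ Finset.Ico 2 (s+1), (1:ℝ)/i :=
      Finset.sum_Ico_consecutive _ (by omega) (by omega)
    rw [← hico] at hsplit
    linarith
  have hlog := log_le_recip_sum (j+2) (by omega) (s+1)
  have hcast1 : ((j+2:ℕ):ℝ) = (j:ℝ)+2 := by push_cast; ring
  have hcast2 : ((s+1:ℕ):ℝ) = (s:ℝ)+1 := by push_cast; ring
  rw [hcast1, hcast2] at hlog
  have hmain : (n:ℝ) * (Real.log ((s:ℝ)+1) - Real.log ((j:ℝ)+2))
      - ((s:ℝ)-1-(j:ℝ))*(2+2*(m:ℝ)) ≤ (T.card : ℝ) := by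
    have hsum1 : ∑ a ∈ S, ((n:ℝ)/a - (2 + 2*(m:ℝ))) ≤ ∑ a ∈ S, (g a : ℝ) :=
      Finset.sum_le_sum (fun a ha => by have := hper a ha; linarith)
    have hsum2 : ∑ a ∈ S, ((n:ℝ)/a - (2+2*(m:ℝ)))
        = (n:ℝ) * ∑ a ∈ S, 1/(a:ℝ) - (S.card:ℝ) * (2+2*(m:ℝ)) := by
      rw [Finset.sum_sub_distrib, Finset.sum_const, Finset.mul_sum, nsmul_eq_mul]
      congr 1
      exact Finset.sum_congr rfl (fun a _ => by rw [mul_one_div])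
    have hQR : (Q.card:ℝ) = ∑ a ∈ S, (g a : ℝ) := by
      rw [hQcard]; push_cast; ring
    have hTQ : (Q.card:ℝ) ≤ (T.card:ℝ) := by exact_mod_cast hQT
    have hmul : (n:ℝ) * (Real.log ((s:ℝ)+1) - Real.log ((j:ℝ)+2))
        ≤ (n:ℝ) * ∑ a ∈ S, 1/(a:ℝ) := by
      apply mul_le_mul_of_nonneg_left _ hn0
      linarith
    rw [hSc] at hsum2
    linarith
  -- final analytic inequality
  have hjr : (j:ℝ) ≤ (m:ℝ) := by exact_mod_cast hjm
  have hj0 : (0:ℝ) ≤ (j:ℝ) := Nat.cast_nonneg j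
  have hfinal : (n:ℝ)/8 ≤ (n:ℝ) * (Real.log ((s:ℝ)+1) - Real.log ((j:ℝ)+2))
      - ((s:ℝ)-1-(j:ℝ))*(2+2*(m:ℝ)) :=
    analytic_bound r (s:ℝ) (m:ℝ) (j:ℝ) (n:ℝ) hr1000 hr2.symm hsr hrs1 hmr hm0 hj0 hjr
  linarith
end

section
/- For every ε > 0 there exists n₀ such that for all n ≥ n₀, every 2-coloring of {2,...,n} contains at least n^{1/3 - ε} monochromatic product Schur triples. -/
open Finset Filter Real

section helpers

lemma fin2_eq : ∀ a b c : Fin 2, a ≠ c → b ≠ c → a = b := by decide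

lemma pf_monomial (p q i j : ℕ) (hp : p.Prime) (hq : q.Prime) (hi : 1 ≤ i) (hj : 1 ≤ j) :
    (p^i * q^j).primeFactors = {p, q} := by
  rw [Nat.primeFactors_mul (pow_ne_zero _ hp.pos.ne') (pow_ne_zero _ hq.pos.ne'),
    Nat.primeFactors_pow _ (by omega), Nat.primeFactors_pow _ (by omega),
    Nat.Prime.primeFactors hp, Nat.Prime.primeFactors hq]
  ext a; simp [or_comm]

lemma pair_eq {p q p' q' : ℕ}
    (h : ({p, q} : Finset ℕ) = {p', q'}) : (p = p' ∧ q = q') ∨ (p = q' ∧ q = p') := by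
  have h1 : p ∈ ({p', q'} : Finset ℕ) := by rw [← h]; simp
  have h2 : q ∈ ({p', q'} : Finset ℕ) := by rw [← h]; simp
  have h3 : p' ∈ ({p, q} : Finset ℕ) := by rw [h]; simp
  have h4 : q' ∈ ({p, q} : Finset ℕ) := by rw [h]; simp
  simp only [Finset.mem_insert, Finset.mem_singleton] at h1 h2 h3 h4
  omega

end helpers

section treelemma

lemma mk_pair (χ : ℕ → Fin 2) (n u w : ℕ) (h2u : 2 ≤ u) (h2w : 2 ≤ w)
    (hn : u * w ≤ n) (hc : χ u = χ w) (hcc : χ u = χ (u * w)) :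
    (min u w : ℕ) ≤ max u w ∧ 2 ≤ min u w ∧ (min u w) * (max u w) ≤ n ∧
      χ (min u w) = χ (max u w) ∧ χ (max u w) = χ ((min u w) * (max u w)) := by
  have hmm : (min u w) * (max u w) = u * w := min_mul_max u w
  rcases le_total u w with h | h
  · rw [min_eq_left h, max_eq_right h]
    exact ⟨h, h2u, hn, hc, hc ▸ hcc⟩
  · rw [min_eq_right h, max_eq_left h]
    rw [mul_comm w u]
    exact ⟨h, h2w, hn, hc.symm, hcc⟩

/-- The decision-tree lemma: for `p, q ≥ 2` with matching colours of
`p,q` and `p²,q²`, some monochromatic product triple exists among monomials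
`p^i q^j` with `i + j ≤ 5`, `i, j ≥ 1`. -/
lemma tree (χ : ℕ → Fin 2) (n p q : ℕ) :
    ∃ v : ℕ × ℕ, (2 ≤ p → 2 ≤ q → χ p = χ q → χ (p^2) = χ (q^2) →
      p * q ≤ n → p^2 * q^2 ≤ n → p^3 * q ≤ n → p^2 * q^3 ≤ n →
      (v.1 ≤ v.2 ∧ 2 ≤ v.1 ∧ v.1 * v.2 ≤ n ∧
        χ v.1 = χ v.2 ∧ χ v.2 = χ (v.1 * v.2) ∧
        ∃ i j : ℕ, 1 ≤ i ∧ 1 ≤ j ∧ v.1 * v.2 = p^i * q^j)) := by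
  by_cases h1 : χ (p * q) = χ p
  · refine ⟨(min p q, max p q), fun hp hq hc hc2 s1 s2 s3 s4 => ?_⟩
    obtain ⟨a, b, c, d, e⟩ := mk_pair χ n p q hp hq s1 hc h1.symm
    exact ⟨a, b, c, d, e, 1, 1, le_refl 1, le_refl 1, by rw [min_mul_max]; ring⟩
  by_cases h2 : χ (p^2 * q^2) = χ (p^2)
  · refine ⟨(min (p^2) (q^2), max (p^2) (q^2)), fun hp hq hc hc2 s1 s2 s3 s4 => ?_⟩
    have h2p : 2 ≤ p^2 := le_trans hp (Nat.le_self_pow two_ne_zero p)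
    have h2q : 2 ≤ q^2 := le_trans hq (Nat.le_self_pow two_ne_zero q)
    obtain ⟨a, b, c, d, e⟩ := mk_pair χ n (p^2) (q^2) h2p h2q s2 hc2 h2.symm
    exact ⟨a, b, c, d, e, 2, 2, one_le_two, one_le_two, by rw [min_mul_max]⟩
  by_cases h3 : χ (p^2) = χ p
  · refine ⟨(p * q, p * q), fun hp hq hc hc2 s1 s2 s3 s4 => ?_⟩
    have hpq2 : 2 ≤ p * q := le_trans hp (Nat.le_mul_of_pos_right p (by omega))
    have hval : (p * q) * (p * q) = p^2 * q^2 := by ring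
    have hcol : χ (p * q) = χ (p^2 * q^2) := by
      refine fin2_eq _ _ (χ p) h1 ?_
      rw [← h3]; exact h2
    refine ⟨le_refl _, hpq2, by rw [hval]; exact s2, rfl, by rw [hval]; exact hcol,
      2, 2, one_le_two, one_le_two, hval⟩
  · have key : ∀ (hp : 2 ≤ p) (hq : 2 ≤ q), χ p = χ q → χ (p^2) = χ (q^2) →
        (χ (p*q) = χ (p^2) ∧ χ (p^2*q^2) = χ p) := by
      intro hp hq hc hc2
      exact ⟨fin2_eq _ _ (χ p) h1 h3, fin2_eq _ _ (χ (p^2)) h2 (fun h => h3 h.symm)⟩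
    by_cases h4 : χ (p^3 * q) = χ (p^2)
    · refine ⟨(min (p^2) (p*q), max (p^2) (p*q), ), fun hp hq hc hc2 s1 s2 s3 s4 => ?_⟩
      obtain ⟨k1, k2⟩ := key hp hq hc hc2
      have h2p : 2 ≤ p^2 := le_trans hp (Nat.le_self_pow two_ne_zero p)
      have hpq2 : 2 ≤ p * q := le_trans hp (Nat.le_mul_of_pos_right p (by omega))
      have hval : (p^2) * (p * q) = p^3 * q := by ring
      obtain ⟨a, b, c, d, e⟩ := mk_pair χ n (p^2) (p*q) h2p hpq2 (by rw [hval]; exact s3)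
        k1.symm (by rw [hval]; exact h4.symm)
      exact ⟨a, b, c, d, e, 3, 1, by omega, le_refl 1, by rw [min_mul_max]; ring⟩
    by_cases h5 : χ (p^2 * q) = χ p
    · refine ⟨(min p (p^2*q), max p (p^2*q)), fun hp hq hc hc2 s1 s2 s3 s4 => ?_⟩
      obtain ⟨k1, k2⟩ := key hp hq hc hc2
      have h2pq : 2 ≤ p^2 * q := le_trans hp (le_trans (Nat.le_self_pow two_ne_zero p)
        (Nat.le_mul_of_pos_right _ (by omega)))
      have hval : p * (p^2 * q) = p^3 * q := by ring
      have hc3 : χ (p^3 * q) = χ p := fin2_eq _ _ (χ (p^2)) h4 (fun h => h3 h.symm)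
      obtain ⟨a, b, c, d, e⟩ := mk_pair χ n p (p^2*q) hp h2pq (by rw [hval]; exact s3)
        h5.symm (by rw [hval]; exact hc3.symm)
      exact ⟨a, b, c, d, e, 3, 1, by omega, le_refl 1, by rw [min_mul_max]; ring⟩
    by_cases h6 : χ (p^2 * q^3) = χ (p^2)
    · refine ⟨(min (p^2*q) (q^2), max (p^2*q) (q^2)), fun hp hq hc hc2 s1 s2 s3 s4 => ?_⟩
      obtain ⟨k1, k2⟩ := key hp hq hc hc2
      have h2pq : 2 ≤ p^2 * q := le_trans hp (le_trans (Nat.le_self_pow two_ne_zero p)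
        (Nat.le_mul_of_pos_right _ (by omega)))
      have h2q : 2 ≤ q^2 := le_trans hq (Nat.le_self_pow two_ne_zero q)
      have hval : (p^2 * q) * (q^2) = p^2 * q^3 := by ring
      have hc5 : χ (p^2 * q) = χ (p^2) := fin2_eq _ _ (χ p) h5 h3
      obtain ⟨a, b, c, d, e⟩ := mk_pair χ n (p^2*q) (q^2) h2pq h2q (by rw [hval]; exact s4)
        (hc5.trans hc2) (by rw [hval]; exact hc5.trans h6.symm)
      exact ⟨a, b, c, d, e, 2, 3, one_le_two, by omega, by rw [min_mul_max]; ring⟩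
    · refine ⟨(min q (p^2*q^2), max q (p^2*q^2)), fun hp hq hc hc2 s1 s2 s3 s4 => ?_⟩
      obtain ⟨k1, k2⟩ := key hp hq hc hc2
      have h2pq : 2 ≤ p^2 * q^2 := le_trans hq (le_trans (Nat.le_self_pow two_ne_zero q)
        (Nat.le_mul_of_pos_left _ (by positivity)))
      have hval : q * (p^2 * q^2) = p^2 * q^3 := by ring
      have hc6 : χ (p^2 * q^3) = χ p := fin2_eq _ _ (χ (p^2)) h6 (fun h => h3 h.symm)
      obtain ⟨a, b, c, d, e⟩ := mk_pair χ n q (p^2*q^2) hq h2pq (by rw [hval]; exact s4)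
        (hc.symm.trans k2.symm) (by rw [hval]; exact hc.symm.trans hc6.symm)
      exact ⟨a, b, c, d, e, 2, 3, one_le_two, by omega, by rw [min_mul_max]; ring⟩

end treelemma

section chebyshev

lemma cheby (m : ℕ) (hm : 2 ≤ m) :
    2 ^ (m - 1) ≤ (m + 1) ^ (((Finset.range (m+1)).filter Nat.Prime).card + 1) := by
  set N := m / 2 with hN
  have hN1 : 1 ≤ N := by omega
  set C := Nat.centralBinom N with hC
  have hCpos : 0 < C := Nat.centralBinom_pos N
  have hprod : C = ∏ p ∈ C.primeFactors, p ^ C.factorization p := by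
    conv_lhs => rw [← Nat.factorization_prod_pow_eq_self hCpos.ne']
    rfl
  have hfac : ∀ p ∈ C.primeFactors, p ^ C.factorization p ≤ 2 * N := by
    intro p hp
    have := Nat.pow_factorization_choose_le (p := p) (n := 2 * N) (k := N) (by omega)
    simpa [hC, Nat.centralBinom] using this
  have hCle : C ≤ (2 * N) ^ C.primeFactors.card := by
    calc C = ∏ p ∈ C.primeFactors, p ^ C.factorization p := hprod
    _ ≤ ∏ _p ∈ C.primeFactors, (2 * N) := Finset.prod_le_prod' hfac
    _ = (2 * N) ^ C.primeFactors.card := by rw [Finset.prod_const]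
  have hsub : C.primeFactors ⊆ (Finset.range (m+1)).filter Nat.Prime := by
    intro p hp
    have hpp : p.Prime := Nat.prime_of_mem_primeFactors hp
    have hν : 1 ≤ C.factorization p := (Nat.Prime.pow_dvd_iff_le_factorization hpp hCpos.ne').mp
      (by simpa using Nat.dvd_of_mem_primeFactors hp)
    have : p ≤ 2 * N := by
      calc p = p ^ 1 := (pow_one p).symm
      _ ≤ p ^ C.factorization p := Nat.pow_le_pow_right hpp.pos hν
      _ ≤ 2 * N := hfac p hp
    exact Finset.mem_filter.mpr ⟨Finset.mem_range.mpr (by omega), hpp⟩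
  have hcard : C.primeFactors.card ≤ ((Finset.range (m+1)).filter Nat.Prime).card :=
    Finset.card_le_card hsub
  have h4 : 4 ^ N ≤ (2 * N + 1) * C := Nat.four_pow_le_two_mul_add_one_mul_central_binom N
  calc 2 ^ (m - 1) ≤ 2 ^ (2 * N) := Nat.pow_le_pow_right (by norm_num) (by omega)
  _ = 4 ^ N := by rw [pow_mul]; norm_num
  _ ≤ (2 * N + 1) * C := h4
  _ ≤ (m + 1) * ((2 * N) ^ C.primeFactors.card) := Nat.mul_le_mul (by omega) hCle
  _ ≤ (m + 1) * ((m + 1) ^ C.primeFactors.card) :=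
      Nat.mul_le_mul_left _ (Nat.pow_le_pow_left (by omega) _)
  _ = (m + 1) ^ (C.primeFactors.card + 1) := by rw [pow_succ, mul_comm]
  _ ≤ (m + 1) ^ (((Finset.range (m+1)).filter Nat.Prime).card + 1) :=
      Nat.pow_le_pow_right (by omega) (by omega)

lemma primes_many : ∀ᶠ n : ℕ in Filter.atTop,
    32 * ⌈(n:ℝ) ^ ((1:ℝ)/6)⌉₊ ≤
      ((Finset.range (⌊(n:ℝ) ^ ((1:ℝ)/5)⌋₊ + 1)).filter Nat.Prime).card := by
  have c2 : (0:ℝ) < Real.log 2 / 130 := by positivity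
  have hlog := (isLittleO_log_rpow_atTop (show (0:ℝ) < 1/30 by norm_num)).def c2
  have hlogn := (tendsto_natCast_atTop_atTop (R := ℝ)).eventually hlog
  filter_upwards [hlogn, Filter.eventually_ge_atTop 1024] with n hlo hn
  set x : ℝ := (n:ℝ) with hx
  have hx1024 : (1024:ℝ) ≤ x := by rw [hx]; exact_mod_cast hn
  have hx1 : (1:ℝ) ≤ x := by linarith
  have hx0 : (0:ℝ) < x := by linarith
  set m : ℕ := ⌊x ^ ((1:ℝ)/5)⌋₊ with hm
  set T : ℕ := ⌈x ^ ((1:ℝ)/6)⌉₊ with hT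
  set P := (Finset.range (m+1)).filter Nat.Prime with hP
  have hr5 : (1:ℝ) ≤ x ^ ((1:ℝ)/5) := Real.one_le_rpow hx1 (by norm_num)
  have hr6 : (1:ℝ) ≤ x ^ ((1:ℝ)/6) := Real.one_le_rpow hx1 (by norm_num)
  have hr5ge4 : (4:ℝ) ≤ x ^ ((1:ℝ)/5) := by
    have : (1024:ℝ) ^ ((1:ℝ)/5) ≤ x ^ ((1:ℝ)/5) :=
      Real.rpow_le_rpow (by norm_num) hx1024 (by norm_num)
    have h4 : (1024:ℝ) ^ ((1:ℝ)/5) = 4 := by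
      rw [show (1024:ℝ) = 4 ^ (5:ℕ) by norm_num, ← Real.rpow_natCast 4 5,
        ← Real.rpow_mul (by norm_num)]
      norm_num
    linarith [h4 ▸ this]
  have hmfloor : x ^ ((1:ℝ)/5) - 1 ≤ (m:ℝ) := by
    have := Nat.sub_one_lt_floor (x ^ ((1:ℝ)/5))
    linarith [this.le]
  have hmle : (m:ℝ) ≤ x ^ ((1:ℝ)/5) := Nat.floor_le (by positivity)
  have hm2 : 2 ≤ m := by
    have : (2:ℝ) ≤ (m:ℝ) := by linarith
    exact_mod_cast this
  have hTle : (T:ℝ) ≤ 2 * x ^ ((1:ℝ)/6) := by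
    have := Nat.ceil_lt_add_one (show (0:ℝ) ≤ x ^ ((1:ℝ)/6) by positivity)
    linarith [this.le]
  have hm1x : (m:ℝ) + 1 ≤ x := by
    have h12 : x ^ ((1:ℝ)/5) ≤ x ^ ((1:ℝ)/2) :=
      Real.rpow_le_rpow_of_exponent_le hx1 (by norm_num)
    have hsq : x ^ ((1:ℝ)/2) * x ^ ((1:ℝ)/2) = x := by
      rw [← Real.rpow_add hx0]; norm_num
    have h2x : (2:ℝ) ≤ x ^ ((1:ℝ)/2) := by
      nlinarith [hsq, Real.rpow_nonneg hx0.le ((1:ℝ)/2)]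
    nlinarith [hmle, hsq]
  have hcore : (65 * x ^ ((1:ℝ)/6)) * Real.log x ≤ (1/2 * x ^ ((1:ℝ)/5)) * Real.log 2 := by
    have hn1 : Real.log x ≤ Real.log 2 / 130 * x ^ ((1:ℝ)/30) := by
      have := hlo
      rwa [Real.norm_eq_abs, Real.norm_eq_abs, abs_of_nonneg (Real.log_nonneg hx1),
        abs_of_nonneg (by positivity : (0:ℝ) ≤ x ^ ((1:ℝ)/30))] at this
    have hmul : x ^ ((1:ℝ)/6) * x ^ ((1:ℝ)/30) = x ^ ((1:ℝ)/5) := by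
      rw [← Real.rpow_add hx0]; norm_num
    calc (65 * x ^ ((1:ℝ)/6)) * Real.log x
        ≤ (65 * x ^ ((1:ℝ)/6)) * (Real.log 2 / 130 * x ^ ((1:ℝ)/30)) := by
          apply mul_le_mul_of_nonneg_left hn1 (by positivity)
      _ = (1/2 * (x ^ ((1:ℝ)/6) * x ^ ((1:ℝ)/30))) * Real.log 2 := by ring
      _ = (1/2 * x ^ ((1:ℝ)/5)) * Real.log 2 := by rw [hmul]
  have hcheb := cheby m hm2
  have hlogineq : ((m:ℝ) - 1) * Real.log 2 ≤ ((P.card:ℝ) + 1) * Real.log ((m:ℝ) + 1) := by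
    have := Real.log_le_log (by positivity) (show ((2:ℝ) ^ (m-1) : ℝ) ≤ ((m:ℝ)+1) ^ (P.card+1) by
      calc ((2:ℝ) ^ (m-1) : ℝ) = ((2 ^ (m-1) : ℕ) : ℝ) := by push_cast; ring
        _ ≤ (((m+1) ^ (P.card+1) : ℕ) : ℝ) := by exact_mod_cast hcheb
        _ = ((m:ℝ)+1) ^ (P.card+1) := by push_cast; ring)
    rw [Real.log_pow, Real.log_pow] at this
    have hcast : ((m - 1 : ℕ) : ℝ) = (m:ℝ) - 1 := by
      have : 1 ≤ m := by omega
      push_cast [this]; ring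
    calc ((m:ℝ) - 1) * Real.log 2 = ((m - 1 : ℕ):ℝ) * Real.log 2 := by rw [hcast]
      _ ≤ ((P.card + 1 : ℕ):ℝ) * Real.log ((m:ℝ)+1) := by
          convert this using 2 <;> push_cast <;> ring
      _ = ((P.card:ℝ) + 1) * Real.log ((m:ℝ)+1) := by push_cast; ring
  have hlogm1pos : (0:ℝ) < Real.log ((m:ℝ) + 1) := by
    apply Real.log_pos; have : (2:ℝ) ≤ (m:ℝ) := by exact_mod_cast hm2
    linarith
  have hlogmx : Real.log ((m:ℝ) + 1) ≤ Real.log x := Real.log_le_log (by positivity) hm1x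
  have hmain : ((32 * T : ℕ):ℝ) + 1 ≤ (P.card:ℝ) + 1 := by
    have h1 : (((32 * T : ℕ)):ℝ) + 1 ≤ 65 * x ^ ((1:ℝ)/6) := by
      push_cast
      linarith [hTle, hr6]
    have hchain : ((((32 * T : ℕ)):ℝ) + 1) * Real.log ((m:ℝ)+1)
        ≤ (((P.card:ℝ)) + 1) * Real.log ((m:ℝ)+1) := by
      calc ((((32 * T : ℕ)):ℝ) + 1) * Real.log ((m:ℝ)+1)
          ≤ (65 * x ^ ((1:ℝ)/6)) * Real.log x :=
            mul_le_mul h1 hlogmx hlogm1pos.le (by positivity)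
        _ ≤ (1/2 * x ^ ((1:ℝ)/5)) * Real.log 2 := hcore
        _ ≤ ((m:ℝ) - 1) * Real.log 2 := by
            apply mul_le_mul_of_nonneg_right _ (Real.log_nonneg (by norm_num))
            linarith [hmfloor, hr5ge4]
        _ ≤ ((P.card:ℝ) + 1) * Real.log ((m:ℝ)+1) := hlogineq
    exact le_of_mul_le_mul_right hchain hlogm1pos
  have : (32 * T : ℕ) ≤ P.card := by exact_mod_cast (by linarith : ((32 * T : ℕ):ℝ) ≤ (P.card:ℝ))
  exact this

end chebyshev

/-- For every `ε > 0` and sufficiently large `n`, every 2-colouring of `{2,...,n}`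
contains at least `n^(1/3-ε)` monochromatic product Schur triples (counted as unordered
solutions, i.e. pairs `a ≤ b` with `a*b ≤ n`). -/
theorem stmt6 (ε : ℝ) (hε : 0 < ε) :
    ∃ n₀ : ℕ, ∀ n : ℕ, n₀ ≤ n → ∀ χ : ℕ → Fin 2,
      (n : ℝ) ^ ((1 : ℝ) / 3 - ε) ≤
        ((((Finset.Icc 2 n) ×ˢ (Finset.Icc 2 n)).filter
          (fun q : ℕ × ℕ => q.1 ≤ q.2 ∧ q.1 * q.2 ≤ n ∧
            χ q.1 = χ q.2 ∧ χ q.2 = χ (q.1 * q.2))).card : ℝ) := by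
  obtain ⟨n₁, hn₁⟩ := Filter.eventually_atTop.mp primes_many
  refine ⟨max n₁ 1, fun n hn χ => ?_⟩
  have hn1 : 1 ≤ n := le_trans (le_max_right _ _) hn
  have hprimes := hn₁ n (le_trans (le_max_left _ _) hn)
  set x : ℝ := (n:ℝ) with hx
  have hx1 : (1:ℝ) ≤ x := by rw [hx]; exact_mod_cast hn1
  have hx0 : (0:ℝ) < x := by linarith
  set m : ℕ := ⌊x ^ ((1:ℝ)/5)⌋₊ with hm
  set T : ℕ := ⌈x ^ ((1:ℝ)/6)⌉₊ with hT
  set P := (Finset.range (m+1)).filter Nat.Prime with hP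
  set Good := (((Finset.Icc 2 n) ×ˢ (Finset.Icc 2 n)).filter
          (fun q : ℕ × ℕ => q.1 ≤ q.2 ∧ q.1 * q.2 ≤ n ∧
            χ q.1 = χ q.2 ∧ χ q.2 = χ (q.1 * q.2))) with hGood
  have hr6 : (1:ℝ) ≤ x ^ ((1:ℝ)/6) := Real.one_le_rpow hx1 (by norm_num)
  have hT1 : 1 ≤ T := by
    rw [hT]; exact_mod_cast Nat.one_le_ceil_iff.mpr (by linarith)
  -- m^5 ≤ n
  have hm5 : m^5 ≤ n := by
    have h1 : ((m:ℝ))^(5:ℕ) ≤ (x ^ ((1:ℝ)/5))^(5:ℕ) :=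
      pow_le_pow_left₀ (Nat.cast_nonneg m) (Nat.floor_le (by positivity)) 5
    have h2 : (x ^ ((1:ℝ)/5))^(5:ℕ) = x := by
      rw [← Real.rpow_natCast (x ^ ((1:ℝ)/5)) 5, ← Real.rpow_mul hx0.le]
      norm_num
    have h3 : ((m^5 : ℕ):ℝ) ≤ x := by push_cast; rw [← h2]; exact_mod_cast h1
    rw [hx] at h3
    exact_mod_cast h3
  -- pigeonhole
  have hcard4 : (Finset.univ : Finset (Fin 2 × Fin 2)).card = 4 := by simp
  obtain ⟨y, -, hQcard⟩ := Finset.exists_le_card_fiber_of_mul_le_card_of_maps_to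
    (f := fun p => (χ p, χ (p^2))) (s := P) (t := Finset.univ) (n := 8 * T)
    (fun a _ => Finset.mem_univ _) Finset.univ_nonempty
    (by rw [hcard4]; omega)
  set Q := P.filter (fun p => (χ p, χ (p^2)) = y) with hQ
  have hQcard' : 8 * T ≤ Q.card := hQcard
  -- facts about members of Q
  have hQmem : ∀ p ∈ Q, p.Prime ∧ p ≤ m ∧ (χ p, χ (p^2)) = y := by
    intro p hp
    rw [hQ, Finset.mem_filter, hP, Finset.mem_filter, Finset.mem_range] at hp
    exact ⟨hp.1.2, by omega, hp.2⟩
  set D := Q.offDiag with hD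
  -- the triple-selecting function
  set f : ℕ × ℕ → ℕ × ℕ := fun r => (tree χ n r.1 r.2).choose with hf
  have hspec : ∀ r ∈ D, ((f r).1 ≤ (f r).2 ∧ 2 ≤ (f r).1 ∧ (f r).1 * (f r).2 ≤ n ∧
      χ (f r).1 = χ (f r).2 ∧ χ (f r).2 = χ ((f r).1 * (f r).2) ∧
      ∃ i j : ℕ, 1 ≤ i ∧ 1 ≤ j ∧ (f r).1 * (f r).2 = r.1^i * r.2^j) := by
    intro r hr
    rw [hD, Finset.mem_offDiag] at hr
    obtain ⟨hr1, hr2, hrne⟩ := hr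
    obtain ⟨hp1, hm1, hy1⟩ := hQmem _ hr1
    obtain ⟨hp2, hm2, hy2⟩ := hQmem _ hr2
    have hyy := hy1.trans hy2.symm
    rw [Prod.mk.injEq] at hyy
    have hmono : ∀ a b : ℕ, a ≤ 5 → b ≤ 5 → a + b ≤ 5 → r.1^a * r.2^b ≤ n := by
      intro a b ha hb hab
      calc r.1^a * r.2^b ≤ m^a * m^b :=
        Nat.mul_le_mul (Nat.pow_le_pow_left hm1 a) (Nat.pow_le_pow_left hm2 b)
      _ = m^(a+b) := (pow_add m a b).symm
      _ ≤ m^5 := Nat.pow_le_pow_right (by have := hp1.two_le; omega) hab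
      _ ≤ n := hm5
    exact (tree χ n r.1 r.2).choose_spec hp1.two_le hp2.two_le hyy.1 hyy.2
      (by simpa using hmono 1 1 (by norm_num) (by norm_num) (by norm_num))
      (hmono 2 2 (by norm_num) (by norm_num) (by norm_num))
      (by simpa using hmono 3 1 (by norm_num) (by norm_num) (by norm_num))
      (hmono 2 3 (by norm_num) (by norm_num) (by norm_num))
  -- image lands in Good
  have himage : D.image f ⊆ Good := by
    intro b hb
    obtain ⟨r, hr, hrb⟩ := Finset.mem_image.mp hb
    obtain ⟨o1, o2, o3, o4, o5, -⟩ := hspec r hr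
    rw [← hrb]
    have h21 : 2 ≤ (f r).2 := le_trans o2 o1
    have hle1 : (f r).1 ≤ n := le_trans (Nat.le_mul_of_pos_right _ (by omega)) o3
    have hle2 : (f r).2 ≤ n := le_trans (Nat.le_mul_of_pos_left _ (by omega)) o3
    rw [hGood, Finset.mem_filter, Finset.mem_product, Finset.mem_Icc, Finset.mem_Icc]
    exact ⟨⟨⟨o2, hle1⟩, ⟨h21, hle2⟩⟩, o1, o3, o4, o5⟩
  -- support of f r
  have hsupp : ∀ r ∈ D, ((f r).1 * (f r).2).primeFactors = {r.1, r.2} := by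
    intro r hr
    obtain ⟨-, -, -, -, -, i, j, hi, hj, hij⟩ := hspec r hr
    rw [hD, Finset.mem_offDiag] at hr
    obtain ⟨hr1, hr2, -⟩ := hr
    rw [hij]
    exact pf_monomial _ _ _ _ (hQmem _ hr1).1 (hQmem _ hr2).1 hi hj
  -- fibers have size at most 2
  have hfiber : ∀ b ∈ D.image f, (D.filter (fun r => f r = b)).card ≤ 2 := by
    intro b hb
    obtain ⟨r₀, hr₀, hrb₀⟩ := Finset.mem_image.mp hb
    have hsub : D.filter (fun r => f r = b) ⊆ {r₀, (r₀.2, r₀.1)} := by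
      intro r hr
      rw [Finset.mem_filter] at hr
      obtain ⟨hrD, hrfb⟩ := hr
      have h1 := hsupp r hrD
      have h2 := hsupp r₀ hr₀
      rw [hrfb] at h1
      rw [hrb₀] at h2
      have hpairs : ({r.1, r.2} : Finset ℕ) = {r₀.1, r₀.2} := h1.symm.trans h2
      rcases pair_eq hpairs with ⟨e1, e2⟩ | ⟨e1, e2⟩
      · simp [Finset.mem_insert, Prod.ext_iff, e1, e2]
      · simp [Finset.mem_insert, Finset.mem_singleton, Prod.ext_iff, e1, e2]
    calc (D.filter (fun r => f r = b)).card ≤ ({r₀, (r₀.2, r₀.1)} : Finset (ℕ × ℕ)).card :=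
        Finset.card_le_card hsub
      _ ≤ 2 := Finset.card_insert_le _ _ |>.trans (by simp)
  -- count
  have hDcard : D.card ≤ 2 * (D.image f).card := Finset.card_le_mul_card_image D 2 hfiber
  have hoff : D.card = Q.card * Q.card - Q.card := Finset.offDiag_card Q
  have hQQ : 32 * (T * T) ≤ Q.card * Q.card - Q.card := by
    have h1 : 8 * T * (8 * T - 1) ≤ Q.card * (Q.card - 1) :=
      Nat.mul_le_mul hQcard' (by omega)
    have h2 : Q.card * (Q.card - 1) = Q.card * Q.card - Q.card := by
      rw [Nat.mul_sub, mul_one]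
    have h3 : 32 * (T * T) ≤ 8 * T * (8 * T - 1) := by
      have : 4 * T ≤ 8 * T - 1 := by omega
      calc 32 * (T * T) = (8 * T) * (4 * T) := by ring
        _ ≤ (8 * T) * (8 * T - 1) := Nat.mul_le_mul_left _ this
    omega
  have hfinal : T * T ≤ Good.card := by
    have himc : (D.image f).card ≤ Good.card := Finset.card_le_card himage
    omega
  -- real glue
  have hexp : x ^ ((1:ℝ)/3 - ε) ≤ x ^ ((1:ℝ)/3) :=
    Real.rpow_le_rpow_of_exponent_le hx1 (by linarith)
  have hthird : x ^ ((1:ℝ)/3) ≤ ((T * T : ℕ):ℝ) := by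
    have h1 : x ^ ((1:ℝ)/3) = (x ^ ((1:ℝ)/6))^(2:ℕ) := by
      rw [← Real.rpow_natCast (x ^ ((1:ℝ)/6)) 2, ← Real.rpow_mul hx0.le]
      norm_num
    have h2 : (x ^ ((1:ℝ)/6))^(2:ℕ) ≤ ((T:ℝ))^(2:ℕ) :=
      pow_le_pow_left₀ (by positivity) (Nat.le_ceil _) 2
    rw [h1]
    calc (x ^ ((1:ℝ)/6))^(2:ℕ) ≤ ((T:ℝ))^(2:ℕ) := h2
      _ = ((T * T : ℕ):ℝ) := by push_cast; ring
  calc x ^ ((1:ℝ)/3 - ε) ≤ x ^ ((1:ℝ)/3) := hexp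
    _ ≤ ((T * T : ℕ):ℝ) := hthird
    _ ≤ (Good.card : ℝ) := by exact_mod_cast hfinal
end

section
/- Let k, n be positive integers and let S'(k) be the least m such that every k-coloring of {1,...,m} has a monochromatic solution of a+b=c or a+b=c-1. Then there exists a subset A of {2,...,n} with |A| ≥ n - n^{1/S'(k)} and a k-coloring of A with no monochromatic product Schur triple; i.e., g_*(k,n) ≥ n - n^{1/S'(k)}. -/
/-- The double-sum Schur number `S'(k)`: the least `m > 0` such that every `k`-colouring of
`{1,...,m}` has a monochromatic solution of `a+b=c` or `a+b=c-1`. -/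
noncomputable def doubleSumSchur (k : ℕ) : ℕ :=
  sInf {m : ℕ | 0 < m ∧ ∀ χ : ℕ → Fin k,
    ∃ a ∈ Finset.Icc 1 m, ∃ b ∈ Finset.Icc 1 m, ∃ c ∈ Finset.Icc 1 m,
      (a + b = c ∨ a + b + 1 = c) ∧ χ a = χ b ∧ χ b = χ c}

/-- There is a subset `A ⊆ {2,...,n}` of size at least `n - n^(1/S'(k))` admitting a
`k`-colouring with no monochromatic product Schur triple. -/
theorem stmt7 (k n : ℕ) (hk : 0 < k) (hn : 0 < n) :
    ∃ A : Finset ℕ, A ⊆ Finset.Icc 2 n ∧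
      (n : ℝ) - (n : ℝ) ^ ((1 : ℝ) / doubleSumSchur k) ≤ A.card ∧
      ∃ χ : ℕ → Fin k, ∀ a ∈ A, ∀ b ∈ A, ∀ c ∈ A,
        a * b = c → ¬(χ a = χ b ∧ χ b = χ c) := by
  rcases eq_or_lt_of_le (show 1 ≤ n from hn) with hn1 | hn2
  · -- n = 1 : take the empty set
    refine ⟨∅, by simp, ?_, fun _ => ⟨0, hk⟩, by simp⟩
    rw [← hn1]
    push_cast
    rw [Real.one_rpow]
    simp
  -- now 2 ≤ n
  set T : Set ℕ := {m : ℕ | 0 < m ∧ ∀ χ : ℕ → Fin k,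
    ∃ a ∈ Finset.Icc 1 m, ∃ b ∈ Finset.Icc 1 m, ∃ c ∈ Finset.Icc 1 m,
      (a + b = c ∨ a + b + 1 = c) ∧ χ a = χ b ∧ χ b = χ c} with hT
  have hS : doubleSumSchur k = sInf T := rfl
  by_cases hne : T.Nonempty
  · -- main case
    set S := doubleSumSchur k with hSdef
    have hmem : S ∈ T := hS ▸ Nat.sInf_mem hne
    have hS2 : 2 ≤ S := by
      rcases hmem with ⟨hpos, hall⟩
      rcases Nat.lt_or_ge S 2 with h | h
      · have hS1' : S = 1 := by omega
        obtain ⟨a, ha, b, hb, c, hc, hsum, -⟩ := hall (fun _ => ⟨0, hk⟩)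
        rw [hS1'] at ha hb hc
        simp only [Finset.mem_Icc] at ha hb hc
        omega
      · exact h
    have hS1 : S - 1 ∉ T := by
      rw [hS] at hSdef ⊢; exact Nat.notMem_of_lt_sInf (by omega)
    rw [hT, Set.mem_setOf_eq] at hS1
    push_neg at hS1
    obtain ⟨χ₀, hχ₀⟩ := hS1 (by omega)
    -- the set A
    refine ⟨(Finset.Icc 2 n).filter (fun a => n < a ^ S), Finset.filter_subset _ _, ?_, ?_⟩
    · -- cardinality bound
      set M : ℕ := ⌊(n : ℝ) ^ ((1:ℝ)/S)⌋₊ with hM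
      have hrpos : (0:ℝ) ≤ (n:ℝ) ^ ((1:ℝ)/S) := Real.rpow_nonneg (by positivity) _
      have hM1 : 1 ≤ M := Nat.le_floor (by
        simpa using Real.one_le_rpow (by exact_mod_cast hn) (by positivity))
      have hsub : (Finset.Icc 2 n).filter (fun a => ¬ n < a ^ S) ⊆ Finset.Icc 2 M := by
        intro a ha
        simp only [Finset.mem_filter, Finset.mem_Icc, not_lt] at ha
        obtain ⟨⟨ha2, han⟩, hpow⟩ := ha
        refine Finset.mem_Icc.mpr ⟨ha2, Nat.le_floor ?_⟩
        have h1 : ((a:ℝ) ^ (S:ℕ)) ≤ (n:ℝ) := by exact_mod_cast hpow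
        have hSne : (S:ℝ) ≠ 0 := by positivity
        calc (a:ℝ) = ((a:ℝ) ^ (S:ℝ)) ^ ((1:ℝ)/S) := by
              rw [← Real.rpow_natCast (a:ℝ) S] at *
              rw [← Real.rpow_mul (by positivity), mul_one_div, div_self hSne,
                Real.rpow_one]
          _ ≤ (n:ℝ) ^ ((1:ℝ)/S) := by
              apply Real.rpow_le_rpow (by positivity) _ (by positivity)
              rw [Real.rpow_natCast]; exact h1
      have hFle : ((Finset.Icc 2 n).filter (fun a => ¬ n < a ^ S)).card ≤ M - 1 := by
        have := Finset.card_le_card hsub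
        simpa [Nat.card_Icc] using this
      have hsplit := Finset.card_filter_add_card_filter_not
        (s := Finset.Icc 2 n) (fun a => n < a ^ S)
      rw [Nat.card_Icc] at hsplit
      have hMn : (M:ℝ) ≤ (n:ℝ) ^ ((1:ℝ)/S) := Nat.floor_le hrpos
      have hcard : n ≤ ((Finset.Icc 2 n).filter (fun a => n < a ^ S)).card + M := by
        omega
      have hcast := (Nat.cast_le (α := ℝ)).mpr hcard
      push_cast at hcast
      linarith [hMn]
    · -- the colouring
      have hn2' : 1 < n := hn2
      -- the level function
      set f : ℕ → ℕ := fun a => Nat.log n (a ^ S - 1) + 1 with hf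
      refine ⟨fun a => χ₀ (f a - 1), ?_⟩
      intro a ha b hb c hc hab hcon
      simp only [Finset.mem_filter, Finset.mem_Icc] at ha hb hc
      obtain ⟨⟨ha2, han⟩, hap⟩ := ha
      obtain ⟨⟨hb2, hbn⟩, hbp⟩ := hb
      obtain ⟨⟨hc2, hcn⟩, hcp⟩ := hc
      -- basic facts about f on A
      have key : ∀ x, 2 ≤ x → x ≤ n → n < x ^ S →
          n ^ (f x - 1) < x ^ S ∧ x ^ S ≤ n ^ (f x) ∧ 2 ≤ f x ∧ f x ≤ S := by
        intro x hx2 hxn hxp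
        have hxS1 : x ^ S ≠ 0 := by positivity
        have hxSne : x ^ S - 1 ≠ 0 := by omega
        have hlow : n ^ (f x - 1) < x ^ S := by
          have h := Nat.pow_log_le_self n hxSne
          have hfx : f x - 1 = Nat.log n (x ^ S - 1) := by simp [hf]
          rw [hfx]
          omega
        have hup : x ^ S ≤ n ^ (f x) := by
          have h := Nat.lt_pow_succ_log_self hn2' (x ^ S - 1)
          have hfx : f x = (Nat.log n (x ^ S - 1)).succ := rfl
          rw [hfx]
          omega
        have hfx2 : 2 ≤ f x := by
          by_contra h
          have hfx1 : f x ≤ 1 := by omega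
          have : n ^ (f x) ≤ n ^ 1 := Nat.pow_le_pow_right (by omega) hfx1
          simp at this
          omega
        have hfxS : f x ≤ S := by
          have hxSn : x ^ S - 1 < n ^ S := by
            have : x ^ S ≤ n ^ S := Nat.pow_le_pow_left hxn S
            omega
          have := Nat.log_lt_of_lt_pow hxSne hxSn
          simp only [hf]
          omega
        exact ⟨hlow, hup, hfx2, hfxS⟩
      obtain ⟨hal, hau, haf2, hafS⟩ := key a ha2 han hap
      obtain ⟨hbl, hbu, hbf2, hbfS⟩ := key b hb2 hbn hbp
      obtain ⟨hcl, hcu, hcf2, hcfS⟩ := key c hc2 hcn hcp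
      -- z = f c is f a + f b - 1 or f a + f b
      have hcprod : c ^ S = a ^ S * b ^ S := by rw [← hab, mul_pow]
      have hzle : f c ≤ f a + f b := by
        have h1 : n ^ (f c - 1) < n ^ (f a + f b) := by
          calc n ^ (f c - 1) < c ^ S := hcl
            _ = a ^ S * b ^ S := hcprod
            _ ≤ n ^ (f a) * n ^ (f b) := Nat.mul_le_mul hau hbu
            _ = n ^ (f a + f b) := (pow_add n _ _).symm
        have := (Nat.pow_lt_pow_iff_right hn2').mp h1
        omega
      have hzge : f a + f b - 1 ≤ f c := by
        have h1 : n ^ (f a + f b - 2) < n ^ (f c) := by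
          calc n ^ (f a + f b - 2) = n ^ (f a - 1) * n ^ (f b - 1) := by
                rw [← pow_add]; congr 1; omega
            _ < a ^ S * b ^ S := Nat.mul_lt_mul_of_lt_of_lt hal hbl
            _ = c ^ S := hcprod.symm
            _ ≤ n ^ (f c) := hcu
        have := (Nat.pow_lt_pow_iff_right hn2').mp h1
        omega
      -- contradiction with χ₀
      exact hχ₀ (f a - 1) (Finset.mem_Icc.mpr ⟨by omega, by omega⟩)
        (f b - 1) (Finset.mem_Icc.mpr ⟨by omega, by omega⟩)
        (f c - 1) (Finset.mem_Icc.mpr ⟨by omega, by omega⟩)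
        (by omega) hcon.1 hcon.2
  · -- degenerate case : the set is empty, doubleSumSchur k = 0
    have hS0 : doubleSumSchur k = 0 := by
      rw [hS, Nat.sInf_eq_zero]
      exact Or.inr (Set.not_nonempty_iff_eq_empty.mp hne)
    -- exponent is 1/0 = 0, so the bound is n - 1 : take all of Icc 2 n
    have hbound : (n : ℝ) - (n : ℝ) ^ ((1 : ℝ) / doubleSumSchur k) = n - 1 := by
      rw [hS0]
      norm_num
    -- a colouring of [1, log 2 n] with no mono (double) sums
    have hm : Nat.log 2 n ∉ T := fun h => hne ⟨_, h⟩
    rw [hT, Set.mem_setOf_eq] at hm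
    push_neg at hm
    have hlog1 : 1 ≤ Nat.log 2 n := Nat.le_log_of_pow_le one_lt_two (by omega)
    obtain ⟨χ₀, hχ₀⟩ := hm (by omega)
    refine ⟨Finset.Icc 2 n, le_refl _, ?_, fun a => χ₀ (Nat.log 2 a), ?_⟩
    · rw [hbound, Nat.card_Icc]
      have : ((n + 1 - 2 : ℕ) : ℝ) = (n : ℝ) - 1 := by
        rw [Nat.cast_sub (by omega : 2 ≤ n + 1)]; push_cast; ring
      rw [this]
    · intro a ha b hb c hc hab hcon
      simp only [Finset.mem_Icc] at ha hb hc
      set x := Nat.log 2 a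
      set y := Nat.log 2 b
      set z := Nat.log 2 c
      have hx1 : 1 ≤ x := Nat.le_log_of_pow_le one_lt_two (by omega)
      have hy1 : 1 ≤ y := Nat.le_log_of_pow_le one_lt_two (by omega)
      have hz1 : 1 ≤ z := Nat.le_log_of_pow_le one_lt_two (by omega)
      have hxm : x ≤ Nat.log 2 n := Nat.log_mono_right ha.2
      have hym : y ≤ Nat.log 2 n := Nat.log_mono_right hb.2
      have hzm : z ≤ Nat.log 2 n := Nat.log_mono_right hc.2
      have hzge : x + y ≤ z := by
        apply Nat.le_log_of_pow_le one_lt_two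
        calc 2 ^ (x + y) = 2 ^ x * 2 ^ y := pow_add 2 x y
          _ ≤ a * b := Nat.mul_le_mul (Nat.pow_log_le_self 2 (by omega))
              (Nat.pow_log_le_self 2 (by omega))
          _ = c := hab
      have hzle : z < x + y + 2 := by
        apply Nat.log_lt_of_lt_pow (by omega)
        calc c = a * b := hab.symm
          _ < 2 ^ (x + 1) * 2 ^ (y + 1) :=
            Nat.mul_lt_mul_of_lt_of_lt (Nat.lt_pow_succ_log_self one_lt_two a)
              (Nat.lt_pow_succ_log_self one_lt_two b)
          _ = 2 ^ (x + y + 2) := by rw [← pow_add]; congr 1; omega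
      exact hχ₀ x (Finset.mem_Icc.mpr ⟨hx1, hxm⟩) y (Finset.mem_Icc.mpr ⟨hy1, hym⟩)
        z (Finset.mem_Icc.mpr ⟨hz1, hzm⟩) (by omega) hcon.1 hcon.2
end

section
/- Let χ be a k-coloring of {1,...,m-1} with no monochromatic solution of x+y=z and no monochromatic solution of x+y=z-1. Define a coloring of the integers in (n^{1/m}, n] by assigning to a the color χ(⌈m·log_n(a)⌉ - 1). Then this coloring has no monochromatic triple a, b, c with a*b = c. -/
/-- If `χ` is a `k`-colouring of `{1,...,m-1}` with no monochromatic solution of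
`x+y=z` or `x+y=z-1`, then colouring each `a ∈ (n^{1/m}, n]` with
`χ(⌈m·log_n a⌉ - 1)` yields no monochromatic triple `a*b=c`. -/
theorem stmt8 (n m k : ℕ) (hn : 0 < n) (hm : 0 < m) (hk : 0 < k)
    (hnm : (2 : ℝ) ≤ (n : ℝ) ^ ((1 : ℝ) / m))
    (χ : ℕ → Fin k)
    (hχ : ∀ x ∈ Finset.Icc 1 (m - 1), ∀ y ∈ Finset.Icc 1 (m - 1), ∀ z ∈ Finset.Icc 1 (m - 1),
      (x + y = z ∨ x + y + 1 = z) → ¬(χ x = χ y ∧ χ y = χ z)) :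
    ∀ a b c : ℕ,
      (n : ℝ) ^ ((1 : ℝ) / m) < a → a ≤ n →
      (n : ℝ) ^ ((1 : ℝ) / m) < b → b ≤ n →
      (n : ℝ) ^ ((1 : ℝ) / m) < c → c ≤ n →
      a * b = c →
      ¬(χ (⌈(m : ℝ) * Real.logb n a⌉ - 1).toNat = χ (⌈(m : ℝ) * Real.logb n b⌉ - 1).toNat ∧
        χ (⌈(m : ℝ) * Real.logb n b⌉ - 1).toNat = χ (⌈(m : ℝ) * Real.logb n c⌉ - 1).toNat) := by
  intro a b c ha1 ha2 hb1 hb2 hc1 hc2 habc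
  have hmr : (0 : ℝ) < (m : ℝ) := by exact_mod_cast hm
  have ha0 : (0 : ℝ) < (a : ℝ) := lt_of_lt_of_le (by norm_num) (le_trans hnm ha1.le)
  have hb0 : (0 : ℝ) < (b : ℝ) := lt_of_lt_of_le (by norm_num) (le_trans hnm hb1.le)
  have hc0 : (0 : ℝ) < (c : ℝ) := lt_of_lt_of_le (by norm_num) (le_trans hnm hc1.le)
  have hn1 : (1 : ℝ) < (n : ℝ) := by
    have : (a : ℝ) ≤ (n : ℝ) := by exact_mod_cast ha2
    linarith [le_trans hnm ha1.le]
  -- bounds on m * logb n t for each t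
  have key : ∀ t : ℕ, (n : ℝ) ^ ((1 : ℝ) / m) < t → t ≤ n →
      (1 : ℝ) < (m : ℝ) * Real.logb n t ∧ (m : ℝ) * Real.logb n t ≤ m := by
    intro t ht1 ht2
    have ht0 : (0 : ℝ) < (t : ℝ) := lt_of_lt_of_le (by norm_num) (le_trans hnm ht1.le)
    constructor
    · have h : (1 : ℝ) / m < Real.logb n t :=
        (Real.lt_logb_iff_rpow_lt hn1 ht0).mpr ht1
      have := mul_lt_mul_of_pos_left h hmr
      rw [mul_one_div, div_self (ne_of_gt hmr)] at this
      linarith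
    · have h : Real.logb n t ≤ 1 := by
        have := (Real.logb_le_logb hn1 ht0 (by linarith)).mpr
          (by exact_mod_cast ht2 : (t : ℝ) ≤ (n : ℝ))
        rwa [Real.logb_self_eq_one hn1] at this
      nlinarith
  obtain ⟨hA1, hA2⟩ := key a ha1 ha2
  obtain ⟨hB1, hB2⟩ := key b hb1 hb2
  obtain ⟨hC1, hC2⟩ := key c hc1 hc2
  set x := (m : ℝ) * Real.logb n a with hx
  set y := (m : ℝ) * Real.logb n b with hy
  set z := (m : ℝ) * Real.logb n c with hz
  have hxyz : z = x + y := by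
    rw [hx, hy, hz]
    have : (c : ℝ) = (a : ℝ) * (b : ℝ) := by exact_mod_cast habc.symm
    rw [this, Real.logb_mul (ne_of_gt ha0) (ne_of_gt hb0)]
    ring
  set A := ⌈x⌉ with hA
  set B := ⌈y⌉ with hB
  set C := ⌈z⌉ with hC
  have hA2' : 2 ≤ A := by
    have : (1 : ℤ) < A := Int.lt_ceil.mpr (by exact_mod_cast hA1)
    omega
  have hB2' : 2 ≤ B := by
    have : (1 : ℤ) < B := Int.lt_ceil.mpr (by exact_mod_cast hB1)
    omega
  have hC2' : 2 ≤ C := by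
    have : (1 : ℤ) < C := Int.lt_ceil.mpr (by exact_mod_cast hC1)
    omega
  have hAm : A ≤ (m : ℤ) := Int.ceil_le.mpr (by exact_mod_cast hA2)
  have hBm : B ≤ (m : ℤ) := Int.ceil_le.mpr (by exact_mod_cast hB2)
  have hCm : C ≤ (m : ℤ) := Int.ceil_le.mpr (by exact_mod_cast hC2)
  have hCle : C ≤ A + B := by rw [hC, hxyz]; exact Int.ceil_add_le x y
  have hABle : A + B ≤ C + 1 := by
    have h1 : (A : ℝ) < x + 1 := Int.ceil_lt_add_one x
    have h2 : (B : ℝ) < y + 1 := Int.ceil_lt_add_one y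
    have h3 : z ≤ (C : ℝ) := Int.le_ceil z
    have h4 : ((A + B : ℤ) : ℝ) < ((C + 2 : ℤ) : ℝ) := by push_cast; rw [hxyz] at h3; linarith
    have h5 : A + B < C + 2 := by exact_mod_cast h4
    omega
  have hmem : ∀ D : ℤ, 2 ≤ D → D ≤ (m : ℤ) → (D - 1).toNat ∈ Finset.Icc 1 (m - 1) := by
    intro D h1 h2
    rw [Finset.mem_Icc]
    omega
  refine hχ _ (hmem A hA2' hAm) _ (hmem B hB2' hBm) _ (hmem C hC2' hCm) ?_
  omega
end

section
/- Let ε ∈ (0,1), k ≥ 1, and n > (2/ε)^{S(k)²}, where S(k) is the k-th Schur number. Then every subset A of {2,...,n} with |A| ≥ n - (1-ε)·n^{1/S(k)} has the property that every k-coloring of A contains a monochromatic product Schur triple. -/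
/-- The Schur number `S(k)`: the least `m > 0` such that every `k`-colouring of
`{1,...,m}` has a monochromatic solution of `x+y=z`. -/
noncomputable def schurNumber (k : ℕ) : ℕ :=
  sInf {m : ℕ | 0 < m ∧ ∀ χ : ℕ → Fin k,
    ∃ a ∈ Finset.Icc 1 m, ∃ b ∈ Finset.Icc 1 m, ∃ c ∈ Finset.Icc 1 m,
      a + b = c ∧ χ a = χ b ∧ χ b = χ c}

/-- For `ε ∈ (0,1)`, `k ≥ 1` and `n > (2/ε)^{S(k)²}`, every `A ⊆ {2,...,n}` with
`|A| ≥ n - (1-ε) n^{1/S(k)}` is such that every `k`-colouring of `A` contains a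
monochromatic product Schur triple. -/
theorem stmt10 (ε : ℝ) (hε : ε ∈ Set.Ioo (0 : ℝ) 1) (k n : ℕ) (hk : 1 ≤ k)
    (hn : (2 / ε) ^ (schurNumber k ^ 2) < (n : ℝ)) :
    ∀ A : Finset ℕ, A ⊆ Finset.Icc 2 n →
      (n : ℝ) - (1 - ε) * (n : ℝ) ^ ((1 : ℝ) / schurNumber k) ≤ A.card →
      ∀ χ : ℕ → Fin k, ∃ a ∈ A, ∃ b ∈ A, ∃ c ∈ A,
        a * b = c ∧ χ a = χ b ∧ χ b = χ c := by
  classical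
  obtain ⟨hε0, hε1⟩ := hε
  intro A hA hcard χ
  set s := schurNumber k with hsdef
  set X : ℝ := 2 / ε with hXdef
  have hX1 : (1:ℝ) < X := by
    rw [hXdef, lt_div_iff₀ hε0]; linarith
  have hX0 : (0:ℝ) < X := by linarith
  have hIccCard : (Finset.Icc 2 n).card = n - 1 := by
    rw [Nat.card_Icc]; omega
  have hAcard : A.card ≤ n - 1 := hIccCard ▸ Finset.card_le_card hA
  by_cases hs0 : s = 0
  · -- degenerate case: contradiction from cardinalities
    exfalso
    rw [hs0] at hn hcard
    norm_num at hn hcard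
    have hn1 : 1 ≤ n := by exact_mod_cast hn.le
    have h1 : ((A.card : ℕ) : ℝ) ≤ (n:ℝ) - 1 := by
      have h2 : ((A.card : ℕ) : ℝ) ≤ ((n - 1 : ℕ) : ℝ) := by exact_mod_cast hAcard
      rwa [Nat.cast_sub hn1, Nat.cast_one] at h2
    linarith
  have hspos : 0 < s := Nat.pos_of_ne_zero hs0
  have hsR : (0:ℝ) < (s:ℝ) := by exact_mod_cast hspos
  have hsne : (s:ℝ) ≠ 0 := ne_of_gt hsR
  -- Schur's property for s
  have hSne : {m : ℕ | 0 < m ∧ ∀ χ : ℕ → Fin k,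
      ∃ a ∈ Finset.Icc 1 m, ∃ b ∈ Finset.Icc 1 m, ∃ c ∈ Finset.Icc 1 m,
        a + b = c ∧ χ a = χ b ∧ χ b = χ c}.Nonempty := by
    by_contra h
    rw [Set.not_nonempty_iff_eq_empty] at h
    apply hs0
    rw [hsdef, schurNumber, h, Nat.sInf_empty]
  have hschur := (Nat.sInf_mem hSne).2
  rw [← schurNumber, ← hsdef] at hschur
  -- real quantities
  set t : ℝ := (n:ℝ) ^ ((1:ℝ) / (s:ℝ)) with htdef
  have hnR1 : (1:ℝ) ≤ (n:ℝ) := by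
    have : (1:ℝ) ≤ X ^ (s^2) := one_le_pow₀ hX1.le
    linarith
  have hnR0 : (0:ℝ) ≤ (n:ℝ) := by linarith
  have ht0 : 0 < t := Real.rpow_pos_of_pos (by linarith) _
  have hss : s ^ 2 = s * s := by ring
  have hXst : X ^ s < t := by
    have h1 : ((X ^ (s*s) : ℝ)) ^ ((1:ℝ)/(s:ℝ)) = X ^ s := by
      rw [pow_mul, ← Real.rpow_natCast (X^s) s, ← Real.rpow_mul (by positivity)]
      rw [mul_one_div, div_self hsne, Real.rpow_one]
    have h2 : (X ^ (s*s) : ℝ) ^ ((1:ℝ)/(s:ℝ)) < (n:ℝ) ^ ((1:ℝ)/(s:ℝ)) :=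
      Real.rpow_lt_rpow (by positivity) (by rw [← hss]; exact hn) (one_div_pos.mpr hsR)
    rw [h1] at h2
    exact h2
  obtain ⟨m, hm⟩ : ∃ m, s = m + 1 := ⟨s - 1, (Nat.succ_pred_eq_of_pos hspos).symm⟩
  have hXm1 : (1:ℝ) ≤ X ^ m := one_le_pow₀ hX1.le
  have htX1 : X ^ m < t / X := by
    rw [lt_div_iff₀ hX0]
    calc X ^ m * X = X ^ (m+1) := (pow_succ X m).symm
    _ = X ^ s := by rw [hm]
    _ < t := hXst
  have htX : (1:ℝ) ≤ t / X := le_of_lt (lt_of_le_of_lt hXm1 htX1)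
  have htXt : t / X ≤ t := div_le_self ht0.le hX1.le
  -- power bound: if (a:ℝ) ≤ t and i ≤ s then a^i ≤ n
  have hpowle : ∀ (a : ℕ), (a:ℝ) ≤ t → ∀ i : ℕ, i ≤ s → ((a:ℝ))^i ≤ (n:ℝ) := by
    intro a hat i his
    have h1 : ((a:ℝ))^i ≤ t^i := pow_le_pow_left₀ (Nat.cast_nonneg a) hat i
    have h2 : t ^ i = (n:ℝ) ^ ((1:ℝ)/(s:ℝ) * (i:ℝ)) := by
      rw [htdef, ← Real.rpow_natCast ((n:ℝ) ^ ((1:ℝ)/(s:ℝ))) i, ← Real.rpow_mul hnR0]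
    have h3 : (n:ℝ) ^ ((1:ℝ)/(s:ℝ) * (i:ℝ)) ≤ (n:ℝ) ^ (1:ℝ) := by
      apply Real.rpow_le_rpow_of_exponent_le hnR1
      rw [div_mul_eq_mul_div, one_mul, div_le_one hsR]
      exact_mod_cast his
    rw [Real.rpow_one] at h3
    linarith
  -- disjointness: a^i < b^j for i < j
  have hkey : ∀ (a b i j : ℕ), 1 ≤ i → i < j → j ≤ s → (a:ℝ) ≤ t → t / X < (b:ℝ) →
      ((a:ℝ))^i < ((b:ℝ))^j := by
    intro a b i j hi1 hij hjs hat htb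
    have hb1 : (1:ℝ) ≤ (b:ℝ) := le_trans htX htb.le
    have h1 : ((a:ℝ))^i ≤ t^i := pow_le_pow_left₀ (Nat.cast_nonneg a) hat i
    have h2 : (t/X)^(i+1) < ((b:ℝ))^(i+1) :=
      pow_lt_pow_left₀ htb (by positivity) (by omega)
    have h3 : ((b:ℝ))^(i+1) ≤ ((b:ℝ))^j := pow_le_pow_right₀ hb1 (by omega)
    have h4 : t^i < (t/X)^(i+1) := by
      rw [div_pow, lt_div_iff₀ (by positivity)]
      have hXi : X^(i+1) < t := by
        refine lt_of_le_of_lt ?_ hXst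
        exact pow_le_pow_right₀ hX1.le (by omega)
      calc t^i * X^(i+1) < t^i * t := mul_lt_mul_of_pos_left hXi (by positivity)
      _ = t^(i+1) := (pow_succ t i).symm
    linarith
  -- the candidate interval and the missing set
  set I : Finset ℕ := Finset.Ioc ⌊t/X⌋₊ ⌊t⌋₊ with hIdef
  set M : Finset ℕ := (Finset.Icc 2 n) \ A with hMdef
  have haI : ∀ a ∈ I, t/X < (a:ℝ) ∧ (a:ℝ) ≤ t ∧ 2 ≤ a := by
    intro a ha
    rw [hIdef, Finset.mem_Ioc] at ha
    have h1 : t/X < (a:ℝ) := by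
      have h0 := Nat.lt_floor_add_one (t/X)
      have h2 : (⌊t/X⌋₊ + 1 : ℝ) ≤ (a:ℝ) := by exact_mod_cast Nat.succ_le_of_lt ha.1
      linarith
    have h2 : (a:ℝ) ≤ t := le_trans (by exact_mod_cast ha.2) (Nat.floor_le ht0.le)
    refine ⟨h1, h2, ?_⟩
    have h3 : (1:ℝ) < (a:ℝ) := lt_of_lt_of_le (lt_of_le_of_lt hXm1 htX1) h1.le
    have h4 : 1 < a := by exact_mod_cast h3
    omega
  have hn1 : 1 ≤ n := by exact_mod_cast hnR1
  -- cardinality bounds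
  have hMcard : (M.card : ℝ) ≤ (1-ε)*t - 1 := by
    have h1 : M.card = (Finset.Icc 2 n).card - A.card := Finset.card_sdiff_of_subset hA
    have h2 : (M.card : ℝ) = ((Finset.Icc 2 n).card : ℝ) - A.card := by
      rw [h1, Nat.cast_sub (Finset.card_le_card hA)]
    rw [hIccCard, Nat.cast_sub hn1, Nat.cast_one] at h2
    linarith
  have hIcard : (1-ε)*t - 1 < (I.card : ℝ) := by
    have hfl : ⌊t/X⌋₊ ≤ ⌊t⌋₊ := Nat.floor_mono htXt
    have h1 : I.card = ⌊t⌋₊ - ⌊t/X⌋₊ := by rw [hIdef, Nat.card_Ioc]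
    have h2 : (I.card : ℝ) = (⌊t⌋₊ : ℝ) - (⌊t/X⌋₊ : ℝ) := by
      rw [h1, Nat.cast_sub hfl]
    have h3 : t - 1 < (⌊t⌋₊ : ℝ) := Nat.sub_one_lt_floor t
    have h4 : (⌊t/X⌋₊ : ℝ) ≤ t/X := Nat.floor_le (by positivity)
    have h5 : t / X = ε * t / 2 := by
      rw [hXdef]; field_simp
    have h6 : 0 < ε * t := mul_pos hε0 ht0
    have h4' : (⌊t/X⌋₊ : ℝ) ≤ ε*t/2 := by rw [← h5]; exact h4
    have h7 : (1-ε)*t = t - ε*t := by ring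
    linarith
  -- bad elements of I and the injection into M
  set bad : Finset ℕ := I.filter (fun a => ∃ i, 1 ≤ i ∧ i ≤ s ∧ a^i ∉ A) with hbaddef
  have hwit : ∀ a ∈ bad, 1 ≤ sInf {i | 1 ≤ i ∧ i ≤ s ∧ a^i ∉ A} ∧
      sInf {i | 1 ≤ i ∧ i ≤ s ∧ a^i ∉ A} ≤ s ∧
      a ^ sInf {i | 1 ≤ i ∧ i ≤ s ∧ a^i ∉ A} ∉ A := by
    intro a ha
    rw [hbaddef, Finset.mem_filter] at ha
    obtain ⟨i, hi⟩ := ha.2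
    exact Nat.sInf_mem (⟨i, hi⟩ : {i | 1 ≤ i ∧ i ≤ s ∧ a^i ∉ A}.Nonempty)
  have hbadcard : bad.card ≤ M.card := by
    apply Finset.card_le_card_of_injOn
      (fun a => a ^ sInf {i | 1 ≤ i ∧ i ≤ s ∧ a^i ∉ A})
    · intro a ha
      obtain ⟨hi1, his, hiA⟩ := hwit a ha
      have haI' := haI a (Finset.mem_of_mem_filter a ha)
      rw [hMdef, Finset.mem_coe, Finset.mem_sdiff]
      refine ⟨?_, hiA⟩
      rw [Finset.mem_Icc]
      constructor
      · exact le_trans haI'.2.2 (Nat.le_self_pow (by omega) a)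
      · have := hpowle a haI'.2.1 _ his
        have h2 : ((a ^ sInf {i | 1 ≤ i ∧ i ≤ s ∧ a^i ∉ A} : ℕ) : ℝ) ≤ (n:ℝ) := by
          push_cast; exact this
        exact_mod_cast h2
    · intro a ha b hb hab
      simp only at hab
      obtain ⟨hia1, hias, hiaA⟩ := hwit a ha
      obtain ⟨hib1, hibs, hibA⟩ := hwit b hb
      have haI' := haI a (Finset.mem_of_mem_filter a ha)
      have hbI' := haI b (Finset.mem_of_mem_filter b hb)
      set ia := sInf {i | 1 ≤ i ∧ i ≤ s ∧ a^i ∉ A}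
      set ib := sInf {i | 1 ≤ i ∧ i ≤ s ∧ b^i ∉ A}
      rcases lt_trichotomy ia ib with h | h | h
      · exfalso
        have := hkey a b ia ib hia1 h hibs haI'.2.1 hbI'.1
        have h2 : ((a^ia : ℕ) : ℝ) < ((b^ib : ℕ) : ℝ) := by push_cast; exact this
        rw [hab] at h2
        exact lt_irrefl _ h2
      · rw [h] at hab
        exact Nat.pow_left_injective (by omega) hab
      · exfalso
        have := hkey b a ib ia hib1 h hias hbI'.2.1 haI'.1
        have h2 : ((b^ib : ℕ) : ℝ) < ((a^ia : ℕ) : ℝ) := by push_cast; exact this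
        rw [hab] at h2
        exact lt_irrefl _ h2
  -- a good element exists
  have hltcard : bad.card < I.card := by
    have h1 : (bad.card : ℝ) < (I.card : ℝ) := by
      calc (bad.card : ℝ) ≤ (M.card : ℝ) := by exact_mod_cast hbadcard
      _ ≤ (1-ε)*t - 1 := hMcard
      _ < I.card := hIcard
    exact_mod_cast h1
  have hgoodex : ∃ a ∈ I, a ∉ bad := by
    by_contra h
    push_neg at h
    have : I ⊆ bad := h
    have := Finset.card_le_card this
    omega
  obtain ⟨a, haI2, hanbad⟩ := hgoodex
  have hgood : ∀ i, 1 ≤ i → i ≤ s → a^i ∈ A := by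
    intro i hi1 his
    by_contra hnot
    apply hanbad
    rw [hbaddef, Finset.mem_filter]
    exact ⟨haI2, i, hi1, his, hnot⟩
  -- apply Schur's theorem to exponents
  obtain ⟨x, hx, y, hy, z, hz, hxyz, hc1, hc2⟩ := hschur (fun i => χ (a^i))
  rw [Finset.mem_Icc] at hx hy hz
  refine ⟨a^x, hgood x hx.1 hx.2, a^y, hgood y hy.1 hy.2, a^z, hgood z hz.1 hz.2, ?_, hc1, hc2⟩
  rw [← pow_add, hxyz]
end

section
/- Let n, m ≥ 2 and let A' be a set of integers contained in [ε·n^{1/m}/2, n^{1/m}] with (ε/2)^{m²} > 1/n and ε ∈ (0,1). Then for any two distinct elements a, b of A' and any i, j ∈ {1,...,m}, we have a^i ≠ b^j. -/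
lemma stmt11_aux (n m : ℕ) (hn : 2 ≤ n) (hm : 2 ≤ m) (ε : ℝ)
    (hε : ε ∈ Set.Ioo (0 : ℝ) 1)
    (hεn : (1 : ℝ) / n < (ε / 2) ^ (m ^ 2)) (a b : ℕ)
    (ha1 : ε * (n : ℝ) ^ ((1 : ℝ) / m) / 2 ≤ a) (ha2 : (a : ℝ) ≤ (n : ℝ) ^ ((1 : ℝ) / m))
    (hb1 : ε * (n : ℝ) ^ ((1 : ℝ) / m) / 2 ≤ b) (hb2 : (b : ℝ) ≤ (n : ℝ) ^ ((1 : ℝ) / m))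
    (i j : ℕ) (hj : j ≤ m) (hij : i < j) : a ^ i ≠ b ^ j := by
  intro heq
  set N : ℝ := (n : ℝ) ^ ((1 : ℝ) / m) with hN
  have hm0 : (m : ℝ) ≠ 0 := by positivity
  have hn1 : (1 : ℝ) ≤ (n : ℝ) := by exact_mod_cast Nat.one_le_of_lt hn
  have hn0 : (0 : ℝ) < n := by linarith
  have hNm : N ^ m = (n : ℝ) := by
    rw [hN, ← Real.rpow_natCast ((n : ℝ) ^ ((1 : ℝ) / m)) m,
      ← Real.rpow_mul (by positivity), one_div_mul_cancel hm0, Real.rpow_one]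
  have hN0 : 0 < N := by positivity
  have hN1 : 1 ≤ N := by
    by_contra h
    push_neg at h
    have : N ^ m < 1 := pow_lt_one₀ hN0.le h (by omega)
    rw [hNm] at this; linarith
  have hε0 : 0 < ε / 2 := by have := hε.1; linarith
  have hε1 : ε / 2 < 1 := by have := hε.2; linarith
  have heqR : (a : ℝ) ^ i = (b : ℝ) ^ j := by exact_mod_cast congrArg (Nat.cast : ℕ → ℝ) heq
  have h1 : (ε / 2 * N) ^ j ≤ (a : ℝ) ^ i := by
    rw [heqR]
    exact pow_le_pow_left₀ (by positivity) (by linarith) j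
  have h2 : (a : ℝ) ^ i ≤ N ^ i := pow_le_pow_left₀ (Nat.cast_nonneg a) ha2 i
  have h3 : (ε / 2) ^ j * N * N ^ i ≤ N ^ i := by
    have hji : N ^ i * N ≤ N ^ j := by
      calc N ^ i * N = N ^ (i + 1) := by ring
        _ ≤ N ^ j := pow_le_pow_right₀ hN1 (by omega)
    have : (ε / 2) ^ j * (N ^ i * N) ≤ (ε / 2) ^ j * N ^ j :=
      mul_le_mul_of_nonneg_left hji (by positivity)
    calc (ε / 2) ^ j * N * N ^ i = (ε / 2) ^ j * (N ^ i * N) := by ring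
      _ ≤ (ε / 2) ^ j * N ^ j := this
      _ = (ε / 2 * N) ^ j := by rw [mul_pow]
      _ ≤ (a : ℝ) ^ i := h1
      _ ≤ N ^ i := h2
  have hNi : (0 : ℝ) < N ^ i := by positivity
  have h4 : (ε / 2) ^ j * N ≤ 1 := by
    have := le_of_mul_le_mul_right (by linarith [h3] : (ε / 2) ^ j * N * N ^ i ≤ 1 * N ^ i) hNi
    linarith
  have h5 : ((ε / 2) ^ j * N) ^ m ≤ 1 := by
    calc ((ε / 2) ^ j * N) ^ m ≤ 1 ^ m := pow_le_pow_left₀ (by positivity) h4 m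
      _ = 1 := one_pow m
  have h6 : (ε / 2) ^ (j * m) * (n : ℝ) ≤ 1 := by
    have : ((ε / 2) ^ j * N) ^ m = (ε / 2) ^ (j * m) * (n : ℝ) := by
      rw [mul_pow, ← pow_mul, hNm]
    linarith [this ▸ h5]
  have h7 : (ε / 2) ^ (m ^ 2) ≤ (ε / 2) ^ (j * m) :=
    pow_le_pow_of_le_one hε0.le hε1.le (by nlinarith)
  have h8 : (ε / 2) ^ (j * m) ≤ 1 / n := by
    rw [le_div_iff₀ hn0]; linarith
  linarith

/-- If `A' ⊆ [ε n^{1/m}/2, n^{1/m}]` and `(ε/2)^{m²} > 1/n`, then for distinct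
`a, b ∈ A'` and `i, j ∈ {1,...,m}` we have `a^i ≠ b^j`. -/
theorem stmt11 (n m : ℕ) (hn : 2 ≤ n) (hm : 2 ≤ m) (ε : ℝ) (hε : ε ∈ Set.Ioo (0 : ℝ) 1)
    (hεn : (1 : ℝ) / n < (ε / 2) ^ (m ^ 2))
    (A' : Finset ℕ)
    (hA' : ∀ x ∈ A', ε * (n : ℝ) ^ ((1 : ℝ) / m) / 2 ≤ x ∧ (x : ℝ) ≤ (n : ℝ) ^ ((1 : ℝ) / m)) :
    ∀ a ∈ A', ∀ b ∈ A', a ≠ b →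
      ∀ i ∈ Finset.Icc 1 m, ∀ j ∈ Finset.Icc 1 m, a ^ i ≠ b ^ j := by
  intro a ha b hb hab i hi j hj
  simp only [Finset.mem_Icc] at hi hj
  obtain ⟨ha1, ha2⟩ := hA' a ha
  obtain ⟨hb1, hb2⟩ := hA' b hb
  rcases lt_trichotomy i j with h | h | h
  · exact stmt11_aux n m hn hm ε hε hεn a b ha1 ha2 hb1 hb2 i j hj.2 h
  · subst h
    intro heq
    exact hab (Nat.pow_left_injective (by omega) heq)
  · intro heq
    exact stmt11_aux n m hn hm ε hε hεn b a hb1 hb2 ha1 ha2 j i hi.2 h heq.symm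
end

section
/- If p = p(n) satisfies p³ · n · log n → 0 and p² · √n → 0, then the probability that the random set [2,n]_p contains a product Schur triple tends to 0 as n → ∞. -/
open Finset

open Finset

lemma pow_sum_one (p : ℝ) (t : Finset ℕ) :
    ∑ B ∈ t.powerset, p ^ B.card * (1 - p) ^ (t.card - B.card) = 1 := by
  have h := Finset.prod_add (fun _ : ℕ => p) (fun _ : ℕ => 1 - p) t
  simp only [add_sub_cancel, prod_const, one_pow] at h
  refine Eq.trans ?_ h.symm
  apply Finset.sum_congr rfl
  intro B hB
  rw [mem_powerset] at hB
  rw [card_sdiff_of_subset hB]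

open scoped Classical in
/-- The probability that the random subset of `{2,...,n}` (each element kept independently
with probability `p`) satisfies the predicate `P`. -/
noncomputable def randProb (n : ℕ) (p : ℝ) (P : Finset ℕ → Prop) : ℝ :=
  ∑ A ∈ (Finset.Icc 2 n).powerset,
    if P A then p ^ A.card * (1 - p) ^ ((Finset.Icc 2 n).card - A.card) else 0

open scoped Classical in
lemma randProb_subset (n : ℕ) (p : ℝ) (S : Finset ℕ) (hS : S ⊆ Finset.Icc 2 n) :
    randProb n p (fun A => S ⊆ A) = p ^ S.card := by
  set s := Finset.Icc 2 n with hs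
  rw [randProb]
  have key : ∑ A ∈ (s.powerset.filter (fun A => S ⊆ A)),
      p ^ A.card * (1 - p) ^ (s.card - A.card)
      = ∑ B ∈ (s \ S).powerset, p ^ S.card * (p ^ B.card * (1 - p) ^ ((s \ S).card - B.card)) := by
    refine Finset.sum_nbij' (fun A => A \ S) (fun B => B ∪ S) ?_ ?_ ?_ ?_ ?_
    · intro A hA
      simp only [Finset.mem_filter, Finset.mem_powerset] at hA ⊢
      exact Finset.sdiff_subset_sdiff hA.1 le_rfl
    · intro B hB
      simp only [Finset.mem_filter, Finset.mem_powerset] at hB ⊢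
      constructor
      · exact Finset.union_subset (hB.trans Finset.sdiff_subset) hS
      · exact Finset.subset_union_right
    · intro A hA
      simp only [Finset.mem_filter, Finset.mem_powerset] at hA
      exact Finset.sdiff_union_of_subset hA.2
    · intro B hB
      simp only [Finset.mem_powerset] at hB
      have : Disjoint B S := Finset.disjoint_of_subset_left hB Finset.sdiff_disjoint
      exact Finset.union_sdiff_cancel_right this
    · intro A hA
      simp only [Finset.mem_filter, Finset.mem_powerset] at hA
      have h1 : (A \ S).card = A.card - S.card := Finset.card_sdiff_of_subset hA.2
      have h2 : S.card ≤ A.card := Finset.card_le_card hA.2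
      have h3 : (s \ S).card = s.card - S.card := Finset.card_sdiff_of_subset hS
      have h4 : A.card ≤ s.card := Finset.card_le_card hA.1
      rw [h1, h3, ← mul_assoc, ← pow_add]
      congr 2 <;> omega
  refine Eq.trans (Finset.sum_congr rfl (fun A _ => ?_))
    (Eq.trans (Finset.sum_filter _ _).symm (by rw [key, ← Finset.mul_sum, pow_sum_one, mul_one]))
  by_cases h : S ⊆ A
  · simp only [if_pos h]; rfl
  · simp only [if_neg h]

open scoped Classical in
lemma randProb_le_sum {ι : Type*} (n : ℕ) (p : ℝ) (hp0 : 0 ≤ p) (hp1 : p ≤ 1)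
    (P : Finset ℕ → Prop) (I : Finset ι) (S : ι → Finset ℕ)
    (h : ∀ A ∈ (Finset.Icc 2 n).powerset, P A → ∃ i ∈ I, S i ⊆ A) :
    randProb n p P ≤ ∑ i ∈ I, randProb n p (fun A => S i ⊆ A) := by
  unfold randProb
  rw [Finset.sum_comm]
  refine Finset.sum_le_sum fun A hA => ?_
  have hw : (0:ℝ) ≤ p ^ A.card * (1 - p) ^ ((Finset.Icc 2 n).card - A.card) :=
    mul_nonneg (pow_nonneg hp0 _) (pow_nonneg (by linarith) _)
  by_cases hPA : P A
  · obtain ⟨i, hiI, hiS⟩ := h A hA hPA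
    rw [if_pos hPA, ← Finset.add_sum_erase I _ hiI, if_pos hiS]
    refine le_add_of_nonneg_right (Finset.sum_nonneg fun j _ => ?_)
    split
    · exact hw
    · exact le_rfl
  · rw [if_neg hPA]
    refine Finset.sum_nonneg fun j _ => ?_
    split
    · exact hw
    · exact le_rfl

open Finset

lemma cardT3 (a b : ℕ) (ha : 2 ≤ a) (hb : 2 ≤ b) (hne : a ≠ b) :
    ({a, b, a*b} : Finset ℕ).card = 3 := by
  have h1 : a < a*b := by nlinarith
  have h2 : b < a*b := by nlinarith
  rw [Finset.card_insert_of_notMem (by simp [hne, h1.ne]),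
    Finset.card_insert_of_notMem (by simp [h2.ne]), Finset.card_singleton]

lemma cardT2 (a : ℕ) (ha : 2 ≤ a) : ({a, a, a*a} : Finset ℕ).card = 2 := by
  have h1 : a < a*a := by nlinarith
  rw [Finset.insert_idem, Finset.card_insert_of_notMem (by simp [h1.ne]),
    Finset.card_singleton]

lemma diag_card (n : ℕ) :
    ((((Finset.Icc 2 n) ×ˢ (Finset.Icc 2 n)).filter (fun q : ℕ×ℕ => q.1 * q.2 ≤ n)).filter
      (fun q => q.1 = q.2)).card ≤ Nat.sqrt n := by
  have h : ∀ q ∈ (((Finset.Icc 2 n) ×ˢ (Finset.Icc 2 n)).filter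
      (fun q : ℕ×ℕ => q.1 * q.2 ≤ n)).filter (fun q => q.1 = q.2),
      q.1 ∈ Finset.Icc 2 (Nat.sqrt n) := by
    intro q hq
    simp only [Finset.mem_filter, Finset.mem_product, Finset.mem_Icc] at hq
    obtain ⟨⟨⟨⟨h2a, _⟩, _⟩, hab⟩, heq⟩ := hq
    rw [Finset.mem_Icc]
    refine ⟨h2a, ?_⟩
    rw [Nat.le_sqrt]
    calc q.1 * q.1 = q.1 * q.2 := by rw [heq]
    _ ≤ n := hab
  calc _ ≤ (Finset.Icc 2 (Nat.sqrt n)).card := by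
        refine Finset.card_le_card_of_injOn (fun q => q.1) h ?_
        intro q hq r hr hqr
        simp only [Finset.coe_filter, Set.mem_setOf_eq] at hq hr
        exact Prod.ext hqr (by rw [← hq.2, ← hr.2]; exact hqr)
  _ ≤ Nat.sqrt n := by rw [Nat.card_Icc]; omega

lemma full_card (n : ℕ) :
    (((Finset.Icc 2 n) ×ˢ (Finset.Icc 2 n)).filter (fun q : ℕ×ℕ => q.1 * q.2 ≤ n)).card
      ≤ ∑ a ∈ Finset.Icc 2 n, n / a := by
  rw [Finset.card_eq_sum_card_fiberwise (f := Prod.fst) (t := Finset.Icc 2 n)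
    (fun q hq => by simp only [Finset.mem_coe, Finset.mem_filter, Finset.mem_product] at hq; exact hq.1.1)]
  refine Finset.sum_le_sum fun a ha => ?_
  rw [Finset.mem_Icc] at ha
  have ha0 : 0 < a := by omega
  calc _ ≤ (Finset.Icc 1 (n / a)).card := by
        refine Finset.card_le_card_of_injOn (fun q => q.2) ?_ ?_
        · intro q hq
          simp only [Finset.mem_coe, Finset.mem_filter, Finset.mem_product, Finset.mem_Icc] at hq ⊢
          obtain ⟨⟨⟨_, ⟨h2b, _⟩⟩, hab⟩, heq⟩ := hq
          refine ⟨by omega, ?_⟩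
          rw [Nat.le_div_iff_mul_le ha0, mul_comm]
          rw [← heq]; exact hab
        · intro q hq r hr hqr
          simp only [Finset.coe_filter, Set.mem_setOf_eq] at hq hr
          exact Prod.ext (by rw [hq.2, hr.2]) hqr
  _ ≤ n / a := by simp [Nat.card_Icc]

lemma sum_div_le (n : ℕ) :
    ((∑ a ∈ Finset.Icc 2 n, n / a : ℕ) : ℝ) ≤ n * (1 + Real.log n) := by
  push_cast
  calc ∑ a ∈ Finset.Icc 2 n, ((n / a : ℕ) : ℝ)
      ≤ ∑ a ∈ Finset.Icc 2 n, (n : ℝ) / a :=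
        Finset.sum_le_sum fun a _ => Nat.cast_div_le
    _ ≤ ∑ a ∈ Finset.Icc 1 n, (n : ℝ) / a := by
        refine Finset.sum_le_sum_of_subset_of_nonneg
          (Finset.Icc_subset_Icc_left one_le_two) fun a _ _ => by positivity
    _ = n * ∑ a ∈ Finset.Icc 1 n, ((a : ℝ))⁻¹ := by
        rw [Finset.mul_sum]
        exact Finset.sum_congr rfl fun a _ => div_eq_mul_inv _ _
    _ = n * ((harmonic n : ℚ) : ℝ) := by
        rw [harmonic_eq_sum_Icc]
        push_cast
        ring
    _ ≤ n * (1 + Real.log n) :=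
        mul_le_mul_of_nonneg_left (harmonic_le_one_add_log n) (Nat.cast_nonneg n)

open scoped Classical in
lemma randProb_nonneg (n : ℕ) (p : ℝ) (hp0 : 0 ≤ p) (hp1 : p ≤ 1) (P : Finset ℕ → Prop) :
    0 ≤ randProb n p P :=
  Finset.sum_nonneg fun A _ => by
    split
    · exact mul_nonneg (pow_nonneg hp0 _) (pow_nonneg (by linarith) _)
    · exact le_rfl

lemma main_bound (n : ℕ) (p : ℝ) (hp0 : 0 ≤ p) (hp1 : p ≤ 1) :
    randProb n p (fun A => ∃ a ∈ A, ∃ b ∈ A, a * b ∈ A) ≤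
      p ^ 3 * (n * (1 + Real.log n)) + p ^ 2 * Real.sqrt n := by
  set D := ((Finset.Icc 2 n) ×ˢ (Finset.Icc 2 n)).filter (fun q : ℕ×ℕ => q.1 * q.2 ≤ n) with hD
  have hDmem : ∀ q : ℕ×ℕ, q ∈ D → 2 ≤ q.1 ∧ 2 ≤ q.2 ∧ q.1 * q.2 ≤ n := by
    intro q hq
    simp only [hD, Finset.mem_filter, Finset.mem_product, Finset.mem_Icc] at hq
    exact ⟨hq.1.1.1, hq.1.2.1, hq.2⟩
  have step1 : randProb n p (fun A => ∃ a ∈ A, ∃ b ∈ A, a * b ∈ A) ≤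
      ∑ q ∈ D, randProb n p (fun A => ({q.1, q.2, q.1 * q.2} : Finset ℕ) ⊆ A) := by
    refine randProb_le_sum n p hp0 hp1 _ D _ ?_
    intro A hA hPA
    rw [Finset.mem_powerset] at hA
    obtain ⟨a, ha, b, hb, hab⟩ := hPA
    refine ⟨(a, b), ?_, ?_⟩
    · simp only [hD, Finset.mem_filter, Finset.mem_product]
      exact ⟨⟨hA ha, hA hb⟩, (Finset.mem_Icc.mp (hA hab)).2⟩
    · simp only [Finset.insert_subset_iff, Finset.singleton_subset_iff]
      exact ⟨ha, hb, hab⟩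
  have hTsub : ∀ q : ℕ×ℕ, q ∈ D → ({q.1, q.2, q.1 * q.2} : Finset ℕ) ⊆ Finset.Icc 2 n := by
    intro q hq
    obtain ⟨h1, h2, h3⟩ := hDmem q hq
    simp only [Finset.insert_subset_iff, Finset.singleton_subset_iff, Finset.mem_Icc]
    refine ⟨⟨h1, ?_⟩, ⟨h2, ?_⟩, ⟨?_, h3⟩⟩ <;> nlinarith
  have step2 : ∑ q ∈ D, randProb n p (fun A => ({q.1, q.2, q.1 * q.2} : Finset ℕ) ⊆ A)
      = ∑ q ∈ D, p ^ (({q.1, q.2, q.1 * q.2} : Finset ℕ)).card :=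
    Finset.sum_congr rfl fun q hq => randProb_subset n p _ (hTsub q hq)
  have hsplit : ∑ q ∈ D, p ^ (({q.1, q.2, q.1 * q.2} : Finset ℕ)).card
      = (D.filter (fun q => q.1 = q.2)).card * p ^ 2
        + (D.filter (fun q => ¬ q.1 = q.2)).card * p ^ 3 := by
    rw [← Finset.sum_filter_add_sum_filter_not D (fun q => q.1 = q.2)]
    congr 1
    · rw [Finset.sum_congr rfl (fun q hq => ?_), Finset.sum_const, nsmul_eq_mul]
      rw [Finset.mem_filter] at hq
      obtain ⟨h1, h2, _⟩ := hDmem q hq.1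
      rw [← hq.2, cardT2 q.1 h1]
    · rw [Finset.sum_congr rfl (fun q hq => ?_), Finset.sum_const, nsmul_eq_mul]
      rw [Finset.mem_filter] at hq
      obtain ⟨h1, h2, _⟩ := hDmem q hq.1
      rw [cardT3 q.1 q.2 h1 h2 hq.2]
  have hc2 : ((D.filter (fun q => q.1 = q.2)).card : ℝ) ≤ Real.sqrt n :=
    le_trans (by exact_mod_cast diag_card n) Real.nat_sqrt_le_real_sqrt
  have hc3 : ((D.filter (fun q => ¬ q.1 = q.2)).card : ℝ) ≤ n * (1 + Real.log n) := by
    refine le_trans ?_ (sum_div_le n)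
    exact_mod_cast le_trans (Finset.card_le_card (Finset.filter_subset _ _)) (full_card n)
  have hp2 : (0:ℝ) ≤ p ^ 2 := by positivity
  have hp3 : (0:ℝ) ≤ p ^ 3 := by positivity
  calc randProb n p (fun A => ∃ a ∈ A, ∃ b ∈ A, a * b ∈ A)
      ≤ ∑ q ∈ D, p ^ (({q.1, q.2, q.1 * q.2} : Finset ℕ)).card := step1.trans (le_of_eq step2)
    _ = (D.filter (fun q => q.1 = q.2)).card * p ^ 2
        + (D.filter (fun q => ¬ q.1 = q.2)).card * p ^ 3 := hsplit
    _ ≤ Real.sqrt n * p ^ 2 + (n * (1 + Real.log n)) * p ^ 3 :=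
        add_le_add (mul_le_mul_of_nonneg_right hc2 hp2) (mul_le_mul_of_nonneg_right hc3 hp3)
    _ = p ^ 3 * (n * (1 + Real.log n)) + p ^ 2 * Real.sqrt n := by ring

/-- If `p³ n log n → 0` and `p² √n → 0` then whp `[2,n]_p` contains no product Schur
triple. -/
theorem stmt12 (p : ℕ → ℝ) (hp : ∀ n, p n ∈ Set.Icc (0 : ℝ) 1)
    (h1 : Filter.Tendsto (fun n : ℕ => p n ^ 3 * n * Real.log n) Filter.atTop (nhds 0))
    (h2 : Filter.Tendsto (fun n : ℕ => p n ^ 2 * Real.sqrt n) Filter.atTop (nhds 0)) :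
    Filter.Tendsto (fun n : ℕ =>
        randProb n (p n) (fun A => ∃ a ∈ A, ∃ b ∈ A, a * b ∈ A))
      Filter.atTop (nhds 0) := by
  have hg : Filter.Tendsto
      (fun n : ℕ => 2 * (p n ^ 3 * n * Real.log n) + p n ^ 2 * Real.sqrt n)
      Filter.atTop (nhds 0) := by
    have := (h1.const_mul 2).add h2
    simpa using this
  refine squeeze_zero' ?_ ?_ hg
  · exact Filter.Eventually.of_forall fun n => randProb_nonneg n (p n) (hp n).1 (hp n).2 _
  · filter_upwards [Filter.eventually_ge_atTop 3] with n hn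
    have hn0 : (0:ℝ) < n := by positivity
    have hlog : (1:ℝ) ≤ Real.log n := by
      rw [Real.le_log_iff_exp_le (by exact_mod_cast Nat.lt_of_lt_of_le (by norm_num) hn)]
      calc Real.exp 1 ≤ 2.7182818286 := Real.exp_one_lt_d9.le
        _ ≤ 3 := by norm_num
        _ ≤ n := by exact_mod_cast hn
    have hb := main_bound n (p n) (hp n).1 (hp n).2
    have h3 : (0:ℝ) ≤ p n ^ 3 * n := by
      have := (hp n).1; positivity
    nlinarith [mul_le_mul_of_nonneg_left hlog h3]
end

section
/- The threshold for the random set [2,n]_p to contain a product Schur triple is (n log n)^{-1/3}: if p ≪ (n log n)^{-1/3} then with high probability [2,n]_p contains no a,b,c (not necessarily distinct) with a*b=c, and if p ≫ (n log n)^{-1/3} then with high probability it contains such a triple. -/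
open Finset Filter

namespace Stmt16

def S (n : ℕ) : Finset ℕ := Finset.Icc 2 n

noncomputable def w (n : ℕ) (p : ℝ) (A : Finset ℕ) : ℝ :=
  p ^ A.card * (1 - p) ^ ((S n).card - A.card)

lemma sum_pow_base (s : Finset ℕ) (x y : ℝ) :
    ∑ A ∈ s.powerset, x ^ A.card * y ^ (s.card - A.card) = (x + y) ^ s.card := by
  have h := Finset.prod_add (fun _ : ℕ => x) (fun _ : ℕ => y) s
  rw [Finset.prod_const] at h
  rw [h]
  refine Finset.sum_congr rfl fun A hA => ?_
  rw [Finset.mem_powerset] at hA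
  rw [Finset.prod_const, Finset.prod_const, Finset.card_sdiff_of_subset hA]

lemma sum_filter_superset {s t : Finset ℕ} (ht : t ⊆ s) (x y : ℝ) :
    ∑ A ∈ s.powerset.filter (fun A => t ⊆ A), x ^ A.card * y ^ (s.card - A.card)
      = x ^ t.card * (x + y) ^ (s.card - t.card) := by
  classical
  have hts : t.card ≤ s.card := Finset.card_le_card ht
  have key : ∑ B ∈ (s \ t).powerset, x ^ (t.card + B.card) * y ^ (s.card - (t.card + B.card))
      = x ^ t.card * (x + y) ^ (s.card - t.card) := by
    have base := sum_pow_base (s \ t) x y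
    have hc : (s \ t).card = s.card - t.card := Finset.card_sdiff_of_subset ht
    calc ∑ B ∈ (s \ t).powerset, x ^ (t.card + B.card) * y ^ (s.card - (t.card + B.card))
        = ∑ B ∈ (s \ t).powerset, x ^ t.card * (x ^ B.card * y ^ ((s \ t).card - B.card)) := by
          refine Finset.sum_congr rfl fun B hB => ?_
          have he : s.card - (t.card + B.card) = (s \ t).card - B.card := by
            rw [hc]; omega
          rw [pow_add, he, mul_assoc]
      _ = x ^ t.card * (x + y) ^ (s.card - t.card) := by
          rw [← Finset.mul_sum, base, hc]
  rw [← key]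
  refine Finset.sum_nbij' (i := fun A => A \ t) (j := fun B => t ∪ B) ?_ ?_ ?_ ?_ ?_
  · intro A hA
    simp only [Finset.mem_filter, Finset.mem_powerset] at hA ⊢
    exact Finset.sdiff_subset_sdiff hA.1 le_rfl
  · intro B hB
    simp only [Finset.mem_filter, Finset.mem_powerset] at hB ⊢
    exact ⟨Finset.union_subset ht (hB.trans (Finset.sdiff_subset)), Finset.subset_union_left⟩
  · intro A hA
    simp only [Finset.mem_filter, Finset.mem_powerset] at hA
    exact Finset.union_sdiff_of_subset hA.2
  · intro B hB
    simp only [Finset.mem_powerset] at hB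
    exact Finset.union_sdiff_cancel_left ((Finset.disjoint_sdiff (s := t) (t := s)).mono_right hB)
  · intro A hA
    simp only [Finset.mem_filter, Finset.mem_powerset] at hA
    have h1 : (A \ t).card + t.card = A.card := Finset.card_sdiff_add_card_eq_card hA.2
    have h2 : A.card ≤ s.card := Finset.card_le_card hA.1
    show x ^ A.card * y ^ (s.card - A.card) = x ^ (t.card + (A \ t).card) * y ^ (s.card - (t.card + (A \ t).card))
    congr 2 <;> omega


lemma sum_w (n : ℕ) (p : ℝ) : ∑ A ∈ (S n).powerset, w n p A = 1 := by
  have := sum_pow_base (S n) p (1 - p)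
  simpa [w] using this

open scoped Classical in
lemma randProb_eq (n : ℕ) (p : ℝ) (P : Finset ℕ → Prop) :
    randProb n p P = ∑ A ∈ (S n).powerset, if P A then w n p A else 0 := rfl

lemma w_nonneg {p : ℝ} (hp : p ∈ Set.Icc (0:ℝ) 1) (n : ℕ) (A : Finset ℕ) : 0 ≤ w n p A :=
  mul_nonneg (pow_nonneg hp.1 _) (pow_nonneg (by linarith [hp.2]) _)

lemma ite_nonneg {p : ℝ} (hp : p ∈ Set.Icc (0:ℝ) 1) (n : ℕ) (A : Finset ℕ)
    {c : Prop} {inst : Decidable c} :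
    (0:ℝ) ≤ @ite ℝ c inst (w n p A) 0 := by
  split
  · exact w_nonneg hp n A
  · exact le_rfl

open scoped Classical in
lemma subset_prob {n : ℕ} (p : ℝ) {T : Finset ℕ} (hT : T ⊆ S n) :
    ∑ A ∈ (S n).powerset, (if T ⊆ A then w n p A else 0) = p ^ T.card := by
  rw [Finset.sum_ite, Finset.sum_const_zero, add_zero]
  have := sum_filter_superset hT p (1 - p)
  simp only [add_sub_cancel, one_pow, mul_one] at this
  rw [← this]
  rfl

lemma randProb_nonneg {p : ℝ} (hp : p ∈ Set.Icc (0:ℝ) 1) (n : ℕ) (P : Finset ℕ → Prop) :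
    0 ≤ randProb n p P := by
  rw [randProb_eq]
  exact Finset.sum_nonneg fun A hA => ite_nonneg hp n A

open scoped Classical in
lemma randProb_compl {p : ℝ} (n : ℕ) (P : Finset ℕ → Prop) :
    randProb n p P + randProb n p (fun A => ¬ P A) = 1 := by
  rw [randProb_eq, randProb_eq, ← Finset.sum_add_distrib, ← sum_w n p]
  refine Finset.sum_congr rfl fun A hA => ?_
  by_cases h : P A <;> simp [h]

open scoped Classical in
lemma union_bound {n : ℕ} {p : ℝ} (hp : p ∈ Set.Icc (0:ℝ) 1) {ι : Type*}
    (Q : Finset ι) (T : ι → Finset ℕ) (hT : ∀ q ∈ Q, T q ⊆ S n)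
    {P : Finset ℕ → Prop}
    (h : ∀ A ∈ (S n).powerset, P A → ∃ q ∈ Q, T q ⊆ A) :
    randProb n p P ≤ ∑ q ∈ Q, p ^ (T q).card := by
  rw [randProb_eq]
  calc ∑ A ∈ (S n).powerset, (if P A then w n p A else 0)
      ≤ ∑ A ∈ (S n).powerset, ∑ q ∈ Q, (if T q ⊆ A then w n p A else 0) := by
        refine Finset.sum_le_sum fun A hA => ?_
        by_cases hPA : P A
        · obtain ⟨q₀, hq₀, hsub⟩ := h A hA hPA
          simp only [hPA, if_pos]
          calc w n p A = (if T q₀ ⊆ A then w n p A else 0) := by rw [if_pos hsub]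
            _ ≤ ∑ q ∈ Q, (if T q ⊆ A then w n p A else 0) := by
                exact Finset.single_le_sum (f := fun q => if T q ⊆ A then w n p A else 0) (fun q hq => ite_nonneg hp n A) hq₀
        · rw [if_neg hPA]
          exact Finset.sum_nonneg fun q hq => ite_nonneg hp n A
    _ = ∑ q ∈ Q, p ^ (T q).card := by
        rw [Finset.sum_comm]
        exact Finset.sum_congr rfl fun q hq => subset_prob p (hT q hq)


open scoped Classical in
lemma chebyshev {n : ℕ} {p : ℝ} (hp : p ∈ Set.Icc (0:ℝ) 1) {ι : Type*}
    (Q : Finset ι) (T : ι → Finset ℕ) (hT : ∀ q ∈ Q, T q ⊆ S n)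
    {P : Finset ℕ → Prop}
    (hP : ∀ A, (∃ q ∈ Q, T q ⊆ A) → P A)
    (μ : ℝ) (hμdef : μ = ∑ q ∈ Q, p ^ (T q).card) (hμ : 0 < μ) :
    randProb n p (fun A => ¬ P A) ≤
      ((∑ q ∈ Q, ∑ q' ∈ Q, p ^ ((T q ∪ T q').card)) - μ^2) / μ^2 := by
  set X : Finset ℕ → ℝ := fun A => ∑ q ∈ Q, (if T q ⊆ A then (1:ℝ) else 0) with hX
  have hEX : ∑ A ∈ (S n).powerset, w n p A * X A = μ := by
    rw [hμdef, hX]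
    simp only [Finset.mul_sum]
    rw [Finset.sum_comm]
    refine Finset.sum_congr rfl fun q hq => ?_
    rw [← subset_prob p (hT q hq)]
    refine Finset.sum_congr rfl fun A hA => ?_
    by_cases h : T q ⊆ A <;> simp [h]
  have hEX2 : ∑ A ∈ (S n).powerset, w n p A * (X A)^2
      = ∑ q ∈ Q, ∑ q' ∈ Q, p ^ ((T q ∪ T q').card) := by
    have expand : ∀ A, w n p A * (X A)^2
        = ∑ q ∈ Q, ∑ q' ∈ Q, (if T q ∪ T q' ⊆ A then w n p A else 0) := by
      intro A
      rw [sq, hX, Finset.sum_mul_sum, Finset.mul_sum]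
      refine Finset.sum_congr rfl fun q hq => ?_
      rw [Finset.mul_sum]
      refine Finset.sum_congr rfl fun q' hq' => ?_
      by_cases h1 : T q ⊆ A <;> by_cases h2 : T q' ⊆ A <;>
        simp [h1, h2, Finset.union_subset_iff]
    rw [Finset.sum_congr rfl (fun A _ => expand A), Finset.sum_comm]
    refine Finset.sum_congr rfl fun q hq => ?_
    rw [Finset.sum_comm]
    exact Finset.sum_congr rfl fun q' hq' =>
      subset_prob p (Finset.union_subset (hT q hq) (hT q' hq'))
  have stepA : randProb n p (fun A => ¬ P A)
      ≤ ∑ A ∈ (S n).powerset, w n p A * (X A - μ)^2 / μ^2 := by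
    rw [randProb_eq]
    refine Finset.sum_le_sum fun A hA => ?_
    by_cases hPA : P A
    · rw [if_neg (not_not_intro hPA)]
      have h1 : (0:ℝ) ≤ w n p A * (X A - μ)^2 := mul_nonneg (w_nonneg hp n A) (sq_nonneg _)
      positivity
    · have hXA : X A = 0 := by
        rw [hX]
        refine Finset.sum_eq_zero fun q hq => ?_
        rw [if_neg]
        intro hsub
        exact hPA (hP A ⟨q, hq, hsub⟩)
      rw [if_pos hPA, hXA, show ((0:ℝ) - μ)^2 = μ^2 by ring, mul_div_assoc,
        div_self (by positivity), mul_one]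
  refine stepA.trans (le_of_eq ?_)
  rw [← Finset.sum_div]
  congr 1
  have expand2 : ∀ A ∈ (S n).powerset, w n p A * (X A - μ)^2
      = w n p A * (X A)^2 - (2*μ) * (w n p A * X A) + μ^2 * w n p A := fun A _ => by ring
  rw [Finset.sum_congr rfl expand2]
  rw [Finset.sum_add_distrib, Finset.sum_sub_distrib, ← Finset.mul_sum, ← Finset.mul_sum,
    hEX2, hEX, sum_w]
  ring


def Pairs (n : ℕ) : Finset ((_ : ℕ) × ℕ) :=
  (Finset.Icc 2 n).sigma fun a => Finset.Icc 2 (n / a)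

def Tq (q : (_ : ℕ) × ℕ) : Finset ℕ := {q.1, q.2, q.1 * q.2}

lemma mem_Pairs {n : ℕ} {q : (_ : ℕ) × ℕ} :
    q ∈ Pairs n ↔ (2 ≤ q.1 ∧ q.1 ≤ n) ∧ (2 ≤ q.2 ∧ q.1 * q.2 ≤ n) := by
  unfold Pairs
  rw [Finset.mem_sigma, Finset.mem_Icc, Finset.mem_Icc]
  constructor
  · rintro ⟨⟨h1, h2⟩, h3, h4⟩
    refine ⟨⟨h1, h2⟩, h3, ?_⟩
    rw [Nat.le_div_iff_mul_le (by omega), mul_comm] at h4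
    exact h4
  · rintro ⟨⟨h1, h2⟩, h3, h4⟩
    refine ⟨⟨h1, h2⟩, h3, ?_⟩
    rw [Nat.le_div_iff_mul_le (by omega), mul_comm]
    exact h4

lemma Tq_subset {n : ℕ} {q : (_ : ℕ) × ℕ} (hq : q ∈ Pairs n) : Tq q ⊆ S n := by
  rw [mem_Pairs] at hq
  obtain ⟨⟨h1, h2⟩, h3, h4⟩ := hq
  intro x hx
  simp only [Tq, Finset.mem_insert, Finset.mem_singleton] at hx
  simp only [S, Finset.mem_Icc]
  rcases hx with h | h | h <;> subst h
  · exact ⟨h1, h2⟩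
  · refine ⟨h3, le_trans ?_ h4⟩
    calc q.2 = 1 * q.2 := (one_mul _).symm
      _ ≤ q.1 * q.2 := by exact Nat.mul_le_mul_right _ (by omega)
  · exact ⟨by nlinarith, h4⟩

lemma card_Tq_diag {q : (_ : ℕ) × ℕ} (h1 : 2 ≤ q.1) (heq : q.1 = q.2) : (Tq q).card = 2 := by
  obtain ⟨a, b⟩ := q
  simp only at h1 heq
  subst heq
  simp only [Tq]
  rw [Finset.insert_idem]
  rw [Finset.card_insert_of_notMem (by simp; nlinarith), Finset.card_singleton]

lemma card_Tq_offdiag {q : (_ : ℕ) × ℕ} (h1 : 2 ≤ q.1) (h2 : 2 ≤ q.2) (hne : q.1 ≠ q.2) :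
    (Tq q).card = 3 := by
  obtain ⟨a, b⟩ := q
  simp only at h1 h2 hne
  simp only [Tq]
  rw [Finset.card_insert_of_notMem (by
      simp only [Finset.mem_insert, Finset.mem_singleton]
      push_neg
      exact ⟨hne, by nlinarith⟩),
    Finset.card_insert_of_notMem (by simp; nlinarith), Finset.card_singleton]

lemma card_diag_le (n : ℕ) :
    ((Pairs n).filter fun q => q.1 = q.2).card ≤ Nat.sqrt n := by
  have : ((Pairs n).filter fun q => q.1 = q.2).card ≤ (Finset.Icc 1 (Nat.sqrt n)).card := by
    refine Finset.card_le_card_of_injOn (fun q => q.1) ?_ ?_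
    · intro q hq
      rw [Finset.mem_coe, Finset.mem_filter, mem_Pairs] at hq
      obtain ⟨⟨⟨h1, h2⟩, h3, h4⟩, h5⟩ := hq
      show q.1 ∈ Finset.Icc 1 (Nat.sqrt n)
      rw [Finset.mem_Icc]
      refine ⟨by omega, ?_⟩
      rw [Nat.le_sqrt]
      calc q.1 * q.1 = q.1 * q.2 := by rw [h5]
        _ ≤ n := h4
    · intro q hq q' hq' h
      simp only [Finset.mem_coe, Finset.mem_filter] at hq hq'
      have h' : q.fst = q'.fst := h
      have e1 := hq.2
      have e2 := hq'.2
      exact Sigma.ext h' (heq_of_eq (by omega))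
  simpa using this


lemma harmonic_eq_Ioc (k : ℕ) : (harmonic k : ℝ) = ∑ a ∈ Finset.Ioc 0 k, (a:ℝ)⁻¹ := by
  rw [harmonic_eq_sum_Icc]
  push_cast
  rw [← Finset.Icc_add_one_left_eq_Ioc]; rfl

lemma sum_Ioc_inv {m M : ℕ} (h : m ≤ M) :
    ∑ a ∈ Finset.Ioc m M, (a:ℝ)⁻¹ = (harmonic M : ℝ) - harmonic m := by
  have := Finset.sum_Ioc_consecutive (fun a : ℕ => (a:ℝ)⁻¹) (Nat.zero_le m) h
  rw [harmonic_eq_Ioc, harmonic_eq_Ioc]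
  linarith [this]

lemma log_le_harmonic {m : ℕ} (hm : 1 ≤ m) : Real.log m ≤ (harmonic m : ℝ) := by
  have h2 := log_add_one_le_harmonic (m - 1)
  have hmm : m - 1 + 1 = m := by omega
  rw [hmm] at h2
  refine h2.trans ?_
  have : harmonic (m - 1) ≤ harmonic m := by
    rw [← hmm, harmonic_succ, hmm]
    have : (0:ℚ) ≤ (m:ℚ)⁻¹ := by positivity
    linarith
  exact_mod_cast this

lemma sum_Ioc_inv_le {m M : ℕ} (hm : 1 ≤ m) (h : m ≤ M) :
    ∑ a ∈ Finset.Ioc m M, (a:ℝ)⁻¹ ≤ 1 + Real.log M - Real.log m := by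
  rw [sum_Ioc_inv h]
  have h1 := harmonic_le_one_add_log M
  have h2 := log_le_harmonic hm
  linarith

lemma sum_Ioc_inv_ge {m M : ℕ} (hm : 1 ≤ m) (h : m ≤ M) :
    Real.log (M + 1) - 1 - Real.log m ≤ ∑ a ∈ Finset.Ioc m M, (a:ℝ)⁻¹ := by
  rw [sum_Ioc_inv h]
  have h1 := log_add_one_le_harmonic M
  have h2 := harmonic_le_one_add_log m
  push_cast at h1
  linarith

lemma card_Pairs_le {n : ℕ} (hn : 1 ≤ n) :
    ((Pairs n).card : ℝ) ≤ (n:ℝ) * Real.log n := by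
  unfold Pairs
  rw [Finset.card_sigma]
  push_cast
  calc ∑ a ∈ Finset.Icc 2 n, ((Finset.Icc 2 (n / a)).card : ℝ)
      ≤ ∑ a ∈ Finset.Icc 2 n, (n:ℝ) * (a:ℝ)⁻¹ := by
        refine Finset.sum_le_sum fun a ha => ?_
        rw [Finset.mem_Icc] at ha
        rw [Nat.card_Icc]
        have h1 : ((n / a + 1 - 2 : ℕ) : ℝ) ≤ ((n / a : ℕ) : ℝ) := by
          have hx : ∀ x : ℕ, x + 1 - 2 ≤ x := fun x => by omega
          exact_mod_cast hx (n / a)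
        refine h1.trans ?_
        rw [← div_eq_mul_inv]
        exact Nat.cast_div_le
    _ = (n:ℝ) * ∑ a ∈ Finset.Ioc 1 n, (a:ℝ)⁻¹ := by
        rw [← Finset.mul_sum, ← Finset.Icc_add_one_left_eq_Ioc]; rfl
    _ ≤ (n:ℝ) * Real.log n := by
        refine mul_le_mul_of_nonneg_left ?_ (by positivity)
        rw [sum_Ioc_inv hn]
        have h1 := harmonic_le_one_add_log n
        have h2 : (harmonic 1 : ℝ) = 1 := by norm_num [harmonic_succ, harmonic_zero]
        linarith


lemma nat_sqrt_le_real (n : ℕ) : (Nat.sqrt n : ℝ) ≤ Real.sqrt n := by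
  have h0 : Nat.sqrt n ^ 2 ≤ n := Nat.sqrt_le' n
  have h : ((Nat.sqrt n : ℝ)) ^ 2 ≤ (n:ℝ) := by
    calc ((Nat.sqrt n : ℝ)) ^ 2 = ((Nat.sqrt n ^ 2 : ℕ) : ℝ) := by push_cast; ring
      _ ≤ (n:ℝ) := by exact_mod_cast h0
  calc (Nat.sqrt n : ℝ) = Real.sqrt (((Nat.sqrt n : ℝ))^2) := (Real.sqrt_sq (by positivity)).symm
    _ ≤ Real.sqrt n := Real.sqrt_le_sqrt h

lemma dir1_bound {n : ℕ} (hn : 1 ≤ n) {p : ℝ} (hp : p ∈ Set.Icc (0:ℝ) 1) :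
    randProb n p (fun A => ∃ a ∈ A, ∃ b ∈ A, a * b ∈ A)
      ≤ p^3 * ((n:ℝ) * Real.log n) + p^2 * Real.sqrt n := by
  classical
  have step1 : randProb n p (fun A => ∃ a ∈ A, ∃ b ∈ A, a * b ∈ A)
      ≤ ∑ q ∈ Pairs n, p ^ (Tq q).card := by
    refine union_bound hp (Pairs n) Tq (fun q hq => Tq_subset hq) ?_
    intro A hA hPA
    obtain ⟨a, ha, b, hb, hab⟩ := hPA
    rw [Finset.mem_powerset] at hA
    have hmem : ∀ x ∈ A, 2 ≤ x ∧ x ≤ n := by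
      intro x hx
      have := hA hx
      simpa [S, Finset.mem_Icc] using this
    refine ⟨⟨a, b⟩, ?_, ?_⟩
    · rw [mem_Pairs]
      exact ⟨⟨(hmem a ha).1, (hmem a ha).2⟩, (hmem b hb).1, (hmem _ hab).2⟩
    · simp only [Tq, Finset.insert_subset_iff, Finset.singleton_subset_iff]
      exact ⟨ha, hb, hab⟩
  have hp0 := hp.1
  have hp1 := hp.2
  have step2 : ∑ q ∈ Pairs n, p ^ (Tq q).card
      ≤ ∑ q ∈ Pairs n, (if q.1 = q.2 then p^2 else p^3) := by
    refine Finset.sum_le_sum fun q hq => ?_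
    rw [mem_Pairs] at hq
    by_cases h : q.1 = q.2
    · rw [if_pos h, card_Tq_diag hq.1.1 h]
    · rw [if_neg h, card_Tq_offdiag hq.1.1 hq.2.1 h]
  have step3 : ∑ q ∈ Pairs n, (if q.1 = q.2 then p^2 else p^3)
      ≤ p^3 * ((Pairs n).card : ℝ) + p^2 * (Nat.sqrt n : ℝ) := by
    rw [Finset.sum_ite, Finset.sum_const, Finset.sum_const]
    have c1 : ((Pairs n).filter fun q => q.1 = q.2).card ≤ Nat.sqrt n := card_diag_le n
    have c2 : ((Pairs n).filter fun q => ¬ q.1 = q.2).card ≤ (Pairs n).card :=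
      Finset.card_filter_le _ _
    have e1 : (((Pairs n).filter fun q => q.1 = q.2).card : ℝ) ≤ (Nat.sqrt n : ℝ) := by
      exact_mod_cast c1
    have e2 : (((Pairs n).filter fun q => ¬ q.1 = q.2).card : ℝ) ≤ ((Pairs n).card : ℝ) := by
      exact_mod_cast c2
    rw [nsmul_eq_mul, nsmul_eq_mul]
    have t1 : (((Pairs n).filter fun q => q.1 = q.2).card : ℝ) * p^2 ≤ (Nat.sqrt n : ℝ) * p^2 :=
      mul_le_mul_of_nonneg_right e1 (by positivity)
    have t2 : (((Pairs n).filter fun q => ¬ q.1 = q.2).card : ℝ) * p^3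
        ≤ ((Pairs n).card : ℝ) * p^3 := mul_le_mul_of_nonneg_right e2 (by positivity)
    nlinarith [t1, t2]
  have step4 : p^3 * ((Pairs n).card : ℝ) + p^2 * (Nat.sqrt n : ℝ)
      ≤ p^3 * ((n:ℝ) * Real.log n) + p^2 * Real.sqrt n := by
    have := card_Pairs_le hn
    have := nat_sqrt_le_real n
    have h3 : (0:ℝ) ≤ p^3 := by positivity
    have h2 : (0:ℝ) ≤ p^2 := by positivity
    nlinarith
  linarith [step1, step2, step3, step4]

lemma dir1 (p : ℕ → ℝ) (hp : ∀ n, p n ∈ Set.Icc (0:ℝ) 1)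
    (ht : Tendsto (fun n : ℕ => p n * ((n : ℝ) * Real.log n) ^ ((1:ℝ)/3)) atTop (nhds 0)) :
    Tendsto (fun n : ℕ => randProb n (p n) (fun A => ∃ a ∈ A, ∃ b ∈ A, a * b ∈ A))
      atTop (nhds 0) := by
  set t : ℕ → ℝ := fun n => p n * ((n : ℝ) * Real.log n) ^ ((1:ℝ)/3) with htdef
  have key : ∀ n : ℕ, 3 ≤ n →
      randProb n (p n) (fun A => ∃ a ∈ A, ∃ b ∈ A, a * b ∈ A) ≤ t n ^ 3 + t n ^ 2 := by
    intro n hn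
    have hn1 : 1 ≤ n := by omega
    have hlogpos : (1:ℝ) ≤ Real.log n := by
      rw [Real.le_log_iff_exp_le (by positivity)]
      calc Real.exp 1 ≤ 2.7182818286 := (Real.exp_one_lt_d9).le
        _ ≤ (3:ℝ) := by norm_num
        _ ≤ (n:ℝ) := by exact_mod_cast hn
    have hx : (0:ℝ) ≤ (n:ℝ) * Real.log n := by positivity
    have hcube : t n ^ 3 = p n ^ 3 * ((n:ℝ) * Real.log n) := by
      rw [htdef]
      simp only [mul_pow]
      congr 1
      rw [← Real.rpow_natCast (((n:ℝ) * Real.log n) ^ ((1:ℝ)/3)) 3, ← Real.rpow_mul hx]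
      norm_num
    have hsq : p n ^ 2 * Real.sqrt n ≤ t n ^ 2 := by
      rw [htdef]
      simp only [mul_pow]
      refine mul_le_mul_of_nonneg_left ?_ (by positivity)
      rw [← Real.rpow_natCast (((n:ℝ) * Real.log n) ^ ((1:ℝ)/3)) 2, ← Real.rpow_mul hx]
      norm_num
      rw [Real.sqrt_eq_rpow]
      rw [Real.mul_rpow (by positivity) (by positivity)]
      calc (n:ℝ) ^ ((1:ℝ)/2) ≤ (n:ℝ) ^ ((2:ℝ)/3) := by
            refine Real.rpow_le_rpow_of_exponent_le (by exact_mod_cast hn1) (by norm_num)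
        _ ≤ (n:ℝ) ^ ((2:ℝ)/3) * Real.log n ^ ((2:ℝ)/3) := by
            nth_rewrite 1 [← mul_one ((n:ℝ) ^ ((2:ℝ)/3))]
            refine mul_le_mul_of_nonneg_left ?_ (by positivity)
            calc (1:ℝ) = 1 ^ ((2:ℝ)/3) := by norm_num
              _ ≤ Real.log n ^ ((2:ℝ)/3) := by
                  refine Real.rpow_le_rpow (by norm_num) hlogpos (by norm_num)
    calc randProb n (p n) (fun A => ∃ a ∈ A, ∃ b ∈ A, a * b ∈ A)
        ≤ p n ^3 * ((n:ℝ) * Real.log n) + p n ^2 * Real.sqrt n := dir1_bound hn1 (hp n)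
      _ ≤ t n ^ 3 + t n ^ 2 := by rw [hcube]; linarith
  have hlim : Tendsto (fun n => t n ^ 3 + t n ^ 2) atTop (nhds 0) := by
    have h3 : Tendsto (fun n => t n ^ 3) atTop (nhds 0) := by
      have := ht.pow 3
      simpa using this
    have h2 : Tendsto (fun n => t n ^ 2) atTop (nhds 0) := by
      have := ht.pow 2
      simpa using this
    simpa using h3.add h2
  refine tendsto_of_tendsto_of_tendsto_of_le_of_le' tendsto_const_nhds hlim ?_ ?_
  · exact Eventually.of_forall fun n => randProb_nonneg (hp n) n _
  · filter_upwards [eventually_ge_atTop 3] with n hn using key n hn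


noncomputable def ra (n : ℕ) : ℕ := ⌊(n:ℝ) ^ ((2:ℝ)/5)⌋₊

def rb (n : ℕ) : ℕ := Nat.sqrt n

noncomputable def I (n : ℕ) : Finset ((_ : ℕ) × ℕ) :=
  (Finset.Ioc (ra n) (rb n)).sigma fun a => Finset.Ioc (rb n) (n / a)

lemma mem_I {n : ℕ} {q : (_ : ℕ) × ℕ} :
    q ∈ I n ↔ (ra n < q.1 ∧ q.1 ≤ rb n) ∧ (rb n < q.2 ∧ q.2 ≤ n / q.1) := by
  unfold I
  rw [Finset.mem_sigma, Finset.mem_Ioc, Finset.mem_Ioc]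

lemma one_le_ra {n : ℕ} (hn : 1 ≤ n) : 1 ≤ ra n := by
  refine Nat.le_floor ?_
  rw [Nat.cast_one]
  calc (1:ℝ) = 1 ^ ((2:ℝ)/5) := by rw [Real.one_rpow]
    _ ≤ (n:ℝ) ^ ((2:ℝ)/5) := Real.rpow_le_rpow (by norm_num) (by exact_mod_cast hn) (by norm_num)

lemma ra_le {n : ℕ} : (ra n : ℝ) ≤ (n:ℝ) ^ ((2:ℝ)/5) := Nat.floor_le (by positivity)

lemma lt_ra_add_one (n : ℕ) : (n:ℝ) ^ ((2:ℝ)/5) < (ra n : ℝ) + 1 := by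
  exact_mod_cast Nat.lt_floor_add_one ((n:ℝ) ^ ((2:ℝ)/5))

lemma sqrt_lt_rb_add_one (n : ℕ) : Real.sqrt n < (rb n : ℝ) + 1 := by
  rw [Real.sqrt_lt' (by positivity)]
  have := Nat.lt_succ_sqrt n
  calc (n:ℝ) = ((n:ℕ):ℝ) := rfl
    _ < (((Nat.sqrt n + 1) * (Nat.sqrt n + 1) : ℕ) : ℝ) := by exact_mod_cast this
    _ = ((rb n : ℝ) + 1) ^ 2 := by unfold rb; push_cast; ring

lemma rpow_sq {x : ℝ} (hx : 0 ≤ x) (r : ℝ) : (x ^ r) ^ 2 = x ^ (2 * r) := by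
  rw [← Real.rpow_natCast (x ^ r) 2, ← Real.rpow_mul hx]
  norm_num
  rw [mul_comm]

lemma key_real {n : ℕ} (hn : 2 ≤ n) : (n:ℝ) < ((ra n : ℝ) + 1)^2 * ((rb n : ℝ) + 1) := by
  have hn1 : (1:ℝ) ≤ (n:ℝ) := by exact_mod_cast (by omega : 1 ≤ n)
  have h1 := lt_ra_add_one n
  have h2 := sqrt_lt_rb_add_one n
  have h3 : (0:ℝ) ≤ (n:ℝ) ^ ((2:ℝ)/5) := by positivity
  have h4 : (0:ℝ) ≤ Real.sqrt n := Real.sqrt_nonneg n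
  have h5 : ((n:ℝ) ^ ((2:ℝ)/5))^2 * Real.sqrt n = (n:ℝ) ^ ((13:ℝ)/10) := by
    rw [rpow_sq (by positivity), Real.sqrt_eq_rpow, ← Real.rpow_add (by linarith)]
    norm_num
  have h6 : (n:ℝ) ≤ (n:ℝ) ^ ((13:ℝ)/10) := by
    calc (n:ℝ) = (n:ℝ) ^ ((1:ℝ)) := by rw [Real.rpow_one]
      _ ≤ (n:ℝ) ^ ((13:ℝ)/10) := Real.rpow_le_rpow_of_exponent_le hn1 (by norm_num)
  have hA : ((n:ℝ)^((2:ℝ)/5))^2 * Real.sqrt n < ((ra n:ℝ)+1)^2 * ((rb n:ℝ)+1) := by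
    have p1 : ((n:ℝ)^((2:ℝ)/5))^2 ≤ ((ra n:ℝ)+1)^2 := by nlinarith
    have p2 : (0:ℝ) < ((ra n:ℝ)+1)^2 := by positivity
    calc ((n:ℝ)^((2:ℝ)/5))^2 * Real.sqrt n ≤ ((ra n:ℝ)+1)^2 * Real.sqrt n :=
          mul_le_mul_of_nonneg_right p1 h4
      _ < ((ra n:ℝ)+1)^2 * ((rb n:ℝ)+1) := mul_lt_mul_of_pos_left h2 p2
  linarith

lemma key_nat {n : ℕ} (hn : 2 ≤ n) : n < (ra n + 1) * ((ra n + 1) * (rb n + 1)) := by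
  have := key_real hn
  have : (n:ℝ) < ((ra n + 1) * ((ra n + 1) * (rb n + 1)) : ℕ) := by push_cast; nlinarith
  exact_mod_cast this

lemma I_facts {n : ℕ} {q : (_ : ℕ) × ℕ} (hn : 2 ≤ n) (hq : q ∈ I n) :
    2 ≤ q.1 ∧ q.1 ≤ rb n ∧ rb n < q.2 ∧ q.1 * q.2 ≤ n ∧ q.2 < q.1 * q.2 ∧ q.1 < q.2 := by
  rw [mem_I] at hq
  obtain ⟨⟨h1, h2⟩, h3, h4⟩ := hq
  have hra := one_le_ra (by omega : 1 ≤ n)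
  have ha2 : 2 ≤ q.1 := by omega
  have hab : q.1 * q.2 ≤ n := by
    rw [Nat.le_div_iff_mul_le (by omega), mul_comm] at h4
    exact h4
  have hblt : q.2 < q.1 * q.2 := by nlinarith
  exact ⟨ha2, h2, h3, hab, hblt, by omega⟩

lemma I_sub_Pairs {n : ℕ} (hn : 2 ≤ n) : I n ⊆ Pairs n := by
  intro q hq
  obtain ⟨h1, h2, h3, h4, h5, h6⟩ := I_facts hn hq
  rw [mem_Pairs]
  have hbn : q.2 ≤ n := by nlinarith
  have h1n : q.1 ≤ n := by nlinarith
  exact ⟨⟨h1, h1n⟩, by omega, h4⟩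

lemma b_lt_prod {n : ℕ} {q q' : (_ : ℕ) × ℕ} (hn : 2 ≤ n) (hq : q ∈ I n) (hq' : q' ∈ I n) :
    q.2 < q'.1 * q'.2 := by
  rw [mem_I] at hq hq'
  obtain ⟨⟨h1, h2⟩, h3, h4⟩ := hq
  obtain ⟨⟨h1', h2'⟩, h3', h4'⟩ := hq'
  have hb : q.2 ≤ n / (ra n + 1) := by
    refine h4.trans (Nat.div_le_div_left (by omega) (by omega))
  have hdiv : n / (ra n + 1) < (ra n + 1) * (rb n + 1) := by
    rw [Nat.div_lt_iff_lt_mul (by omega)]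
    calc n < (ra n + 1) * ((ra n + 1) * (rb n + 1)) := key_nat hn
      _ = (ra n + 1) * (rb n + 1) * (ra n + 1) := by ring
  have hprod : (ra n + 1) * (rb n + 1) ≤ q'.1 * q'.2 := Nat.mul_le_mul (by omega) (by omega)
  omega

lemma mem_Tq_cases {n : ℕ} {q q' : (_ : ℕ) × ℕ} (hn : 2 ≤ n)
    (hq : q ∈ I n) (hq' : q' ∈ I n) {x : ℕ} (hx : x ∈ Tq q) (hx' : x ∈ Tq q') :
    (x = q.1 ∧ x = q'.1) ∨ (x = q.2 ∧ x = q'.2) ∨ (x = q.1 * q.2 ∧ x = q'.1 * q'.2) := by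
  obtain ⟨a2, harb, hbrb, habn, hbab, haltb⟩ := I_facts hn hq
  obtain ⟨a2', harb', hbrb', habn', hbab', haltb'⟩ := I_facts hn hq'
  have hbc' : q.2 < q'.1 * q'.2 := b_lt_prod hn hq hq'
  have hb'c : q'.2 < q.1 * q.2 := b_lt_prod hn hq' hq
  simp only [Tq, Finset.mem_insert, Finset.mem_singleton] at hx hx'
  rcases hx with rfl | rfl | rfl <;> rcases hx' with h | h | h <;> omega

lemma card_inter_le_one {n : ℕ} {q q' : (_ : ℕ) × ℕ} (hn : 2 ≤ n)
    (hq : q ∈ I n) (hq' : q' ∈ I n) (hne : q ≠ q') : (Tq q ∩ Tq q').card ≤ 1 := by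
  by_contra hcon
  push_neg at hcon
  obtain ⟨x, hxm, y, hym, hxy⟩ := Finset.one_lt_card.mp hcon
  rw [Finset.mem_inter] at hxm hym
  have hx := mem_Tq_cases hn hq hq' hxm.1 hxm.2
  have hy := mem_Tq_cases hn hq hq' hym.1 hym.2
  obtain ⟨a2, _, _, _, _, _⟩ := I_facts hn hq
  obtain ⟨_, _, hbrb', _, _, _⟩ := I_facts hn hq'
  have hq1pos : 0 < q.1 := by omega
  have hq2pos : 0 < q.2 := by
    obtain ⟨_, _, _, _, _, h6⟩ := I_facts hn hq
    omega
  apply hne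
  have goal12 : q.1 = q'.1 → q.2 = q'.2 → q = q' := by
    intro h1 h2
    exact Sigma.ext h1 (heq_of_eq h2)
  rcases hx with ⟨e1, e1'⟩ | ⟨e1, e1'⟩ | ⟨e1, e1'⟩ <;>
    rcases hy with ⟨e2, e2'⟩ | ⟨e2, e2'⟩ | ⟨e2, e2'⟩
  · exact absurd (e1.trans e2.symm) hxy
  · exact goal12 (e1.symm.trans e1') (e2.symm.trans e2')
  · -- x gives q.1 = q'.1, y gives products equal
    have ha : q.1 = q'.1 := e1.symm.trans e1'
    have hprod : q.1 * q.2 = q'.1 * q'.2 := e2.symm.trans e2'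
    rw [← ha] at hprod
    exact goal12 ha (Nat.eq_of_mul_eq_mul_left hq1pos hprod)
  · exact goal12 (e2.symm.trans e2') (e1.symm.trans e1')
  · exact absurd (e1.trans e2.symm) hxy
  · have hb : q.2 = q'.2 := e1.symm.trans e1'
    have hprod : q.1 * q.2 = q'.1 * q'.2 := e2.symm.trans e2'
    rw [← hb] at hprod
    exact goal12 (Nat.eq_of_mul_eq_mul_right hq2pos hprod) hb
  · have ha : q.1 = q'.1 := e2.symm.trans e2'
    have hprod : q.1 * q.2 = q'.1 * q'.2 := e1.symm.trans e1'
    rw [← ha] at hprod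
    exact goal12 ha (Nat.eq_of_mul_eq_mul_left hq1pos hprod)
  · have hb : q.2 = q'.2 := e2.symm.trans e2'
    have hprod : q.1 * q.2 = q'.1 * q'.2 := e1.symm.trans e1'
    rw [← hb] at hprod
    exact goal12 (Nat.eq_of_mul_eq_mul_right hq2pos hprod) hb
  · exact absurd (e1.trans e2.symm) hxy

lemma overlap_cases {n : ℕ} {q q' : (_ : ℕ) × ℕ} (hn : 2 ≤ n)
    (hq : q ∈ I n) (hq' : q' ∈ I n) (hover : ¬ Disjoint (Tq q) (Tq q')) :
    q.1 = q'.1 ∨ q.2 = q'.2 ∨ q.1 * q.2 = q'.1 * q'.2 := by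
  rw [Finset.not_disjoint_iff] at hover
  obtain ⟨x, hx, hx'⟩ := hover
  rcases mem_Tq_cases hn hq hq' hx hx' with ⟨e, e'⟩ | ⟨e, e'⟩ | ⟨e, e'⟩
  · exact Or.inl (e.symm.trans e')
  · exact Or.inr (Or.inl (e.symm.trans e'))
  · exact Or.inr (Or.inr (e.symm.trans e'))


lemma card_Tq_three {n : ℕ} {q : (_ : ℕ) × ℕ} (hn : 2 ≤ n) (hq : q ∈ I n) :
    (Tq q).card = 3 := by
  obtain ⟨h1, _, _, _, _, h6⟩ := I_facts hn hq
  exact card_Tq_offdiag h1 (by omega) (by omega)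

lemma fiber_a {n : ℕ} {q : (_ : ℕ) × ℕ} (hq : q ∈ I n) :
    ((I n).filter fun q' => q'.1 = q.1).card ≤ n / (ra n + 1) := by
  have h1 : ((I n).filter fun q' => q'.1 = q.1).card
      ≤ (Finset.Ioc (rb n) (n / (ra n + 1))).card := by
    refine Finset.card_le_card_of_injOn (fun q' => q'.2) ?_ ?_
    · intro q' hq'
      rw [Finset.mem_coe, Finset.mem_filter, mem_I] at hq'
      obtain ⟨⟨⟨g1, g2⟩, g3, g4⟩, g5⟩ := hq'
      show q'.2 ∈ Finset.Ioc (rb n) (n / (ra n + 1))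
      rw [Finset.mem_Ioc]
      exact ⟨g3, g4.trans (Nat.div_le_div_left (by omega) (by omega))⟩
    · intro x hx y hy hxy
      simp only [Finset.mem_coe, Finset.mem_filter] at hx hy
      have h1 : x.fst = y.fst := hx.2.trans hy.2.symm
      exact Sigma.ext h1 (heq_of_eq hxy)
  rw [Nat.card_Ioc] at h1
  exact h1.trans (Nat.sub_le _ _)

lemma fiber_b {n : ℕ} {q : (_ : ℕ) × ℕ} :
    ((I n).filter fun q' => q'.2 = q.2).card ≤ rb n := by
  have h1 : ((I n).filter fun q' => q'.2 = q.2).card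
      ≤ (Finset.Ioc (ra n) (rb n)).card := by
    refine Finset.card_le_card_of_injOn (fun q' => q'.1) ?_ ?_
    · intro q' hq'
      rw [Finset.mem_coe, Finset.mem_filter, mem_I] at hq'
      obtain ⟨⟨⟨g1, g2⟩, g3, g4⟩, g5⟩ := hq'
      show q'.1 ∈ Finset.Ioc (ra n) (rb n)
      rw [Finset.mem_Ioc]
      exact ⟨g1, g2⟩
    · intro x hx y hy hxy
      simp only [Finset.mem_coe, Finset.mem_filter] at hx hy
      have h2 : x.snd = y.snd := hx.2.trans hy.2.symm
      exact Sigma.ext hxy (heq_of_eq h2)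
  rw [Nat.card_Ioc] at h1
  omega

lemma fiber_c {n : ℕ} {q : (_ : ℕ) × ℕ} (hn : 2 ≤ n) :
    ((I n).filter fun q' => q'.1 * q'.2 = q.1 * q.2).card ≤ rb n := by
  have h1 : ((I n).filter fun q' => q'.1 * q'.2 = q.1 * q.2).card
      ≤ (Finset.Ioc (ra n) (rb n)).card := by
    refine Finset.card_le_card_of_injOn (fun q' => q'.1) ?_ ?_
    · intro q' hq'
      rw [Finset.mem_coe, Finset.mem_filter, mem_I] at hq'
      obtain ⟨⟨⟨g1, g2⟩, g3, g4⟩, g5⟩ := hq'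
      show q'.1 ∈ Finset.Ioc (ra n) (rb n)
      rw [Finset.mem_Ioc]
      exact ⟨g1, g2⟩
    · intro x hx y hy hxy
      simp only [Finset.mem_coe, Finset.mem_filter] at hx hy
      have hfst : x.fst = y.fst := hxy
      have hx1 := I_facts hn hx.1
      have hprod : x.fst * x.snd = y.fst * y.snd := hx.2.trans hy.2.symm
      rw [hfst] at hprod
      have hsnd : x.snd = y.snd := Nat.eq_of_mul_eq_mul_left (by omega) hprod
      exact Sigma.ext hfst (heq_of_eq hsnd)
  rw [Nat.card_Ioc] at h1
  omega

lemma overlap_count {n : ℕ} {q : (_ : ℕ) × ℕ} (hn : 2 ≤ n) (hq : q ∈ I n) :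
    ((I n).filter fun q' => q' ≠ q ∧ ¬ Disjoint (Tq q) (Tq q')).card
      ≤ n / (ra n + 1) + 2 * rb n := by
  classical
  have hsub : (I n).filter (fun q' => q' ≠ q ∧ ¬ Disjoint (Tq q) (Tq q'))
      ⊆ ((I n).filter fun q' => q'.1 = q.1) ∪
        (((I n).filter fun q' => q'.2 = q.2) ∪
         ((I n).filter fun q' => q'.1 * q'.2 = q.1 * q.2)) := by
    intro q' hq'
    rw [Finset.mem_filter] at hq'
    obtain ⟨hmem, hne, hover⟩ := hq'
    rcases overlap_cases hn hq hmem hover with h | h | h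
    · exact Finset.mem_union_left _ (Finset.mem_filter.mpr ⟨hmem, h.symm⟩)
    · exact Finset.mem_union_right _ (Finset.mem_union_left _
        (Finset.mem_filter.mpr ⟨hmem, h.symm⟩))
    · exact Finset.mem_union_right _ (Finset.mem_union_right _
        (Finset.mem_filter.mpr ⟨hmem, h.symm⟩))
  calc ((I n).filter fun q' => q' ≠ q ∧ ¬ Disjoint (Tq q) (Tq q')).card
      ≤ _ := Finset.card_le_card hsub
    _ ≤ ((I n).filter fun q' => q'.1 = q.1).card +
        (((I n).filter fun q' => q'.2 = q.2).card +
         ((I n).filter fun q' => q'.1 * q'.2 = q.1 * q.2).card) := by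
        refine (Finset.card_union_le _ _).trans ?_
        exact Nat.add_le_add_left (Finset.card_union_le _ _) _
    _ ≤ n / (ra n + 1) + 2 * rb n := by
        have := fiber_a hq
        have := fiber_b (n := n) (q := q)
        have := fiber_c (n := n) (q := q) hn
        omega

lemma var_sum_le {n : ℕ} (hn : 2 ≤ n) {p : ℝ} (hp : p ∈ Set.Icc (0:ℝ) 1) :
    ∑ q ∈ I n, ∑ q' ∈ I n, p ^ (Tq q ∪ Tq q').card
      ≤ p^3 * ((I n).card:ℝ)
        + p^5 * (((I n).card:ℝ) * ((n / (ra n + 1) + 2 * rb n : ℕ):ℝ))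
        + p^6 * ((I n).card:ℝ)^2 := by
  classical
  have inner : ∀ q ∈ I n, ∑ q' ∈ I n, p ^ (Tq q ∪ Tq q').card
      ≤ p^3 + p^5 * ((n / (ra n + 1) + 2 * rb n : ℕ):ℝ) + p^6 * ((I n).card:ℝ) := by
    intro q hq
    have step : ∑ q' ∈ I n, p ^ (Tq q ∪ Tq q').card
        ≤ ∑ q' ∈ I n, ((if q' = q then p^3 else 0)
            + ((if q' ≠ q ∧ ¬ Disjoint (Tq q) (Tq q') then p^5 else 0) + p^6)) := by
      refine Finset.sum_le_sum fun q' hq' => ?_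
      have hp6 : (0:ℝ) ≤ p^6 := pow_nonneg hp.1 6
      have hp5 : (0:ℝ) ≤ p^5 := pow_nonneg hp.1 5
      have hp3 : (0:ℝ) ≤ p^3 := pow_nonneg hp.1 3
      by_cases he : q' = q
      · subst he
        rw [Finset.union_self, card_Tq_three hn hq', if_pos rfl]
        have : ¬ (q' ≠ q' ∧ ¬ Disjoint (Tq q') (Tq q')) := by simp
        rw [if_neg this]
        linarith
      · rw [if_neg he]
        by_cases hd : Disjoint (Tq q) (Tq q')
        · have hcard : (Tq q ∪ Tq q').card = 6 := by
            rw [Finset.card_union_of_disjoint hd, card_Tq_three hn hq, card_Tq_three hn hq']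
          rw [hcard]
          have : ¬ (q' ≠ q ∧ ¬ Disjoint (Tq q) (Tq q')) := by
            push_neg
            intro _
            exact hd
          rw [if_neg this]
          linarith
        · have hinter : (Tq q ∩ Tq q').card ≤ 1 :=
            card_inter_le_one hn hq hq' (fun h => he (h.symm ▸ rfl))
          have hcard : 5 ≤ (Tq q ∪ Tq q').card := by
            have := Finset.card_union_add_card_inter (Tq q) (Tq q')
            rw [card_Tq_three hn hq, card_Tq_three hn hq'] at this
            omega
          have hle : p ^ (Tq q ∪ Tq q').card ≤ p^5 :=
            pow_le_pow_of_le_one hp.1 hp.2 hcard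
          rw [if_pos ⟨he, hd⟩]
          linarith
    refine step.trans ?_
    rw [Finset.sum_add_distrib, Finset.sum_add_distrib]
    have e1 : ∑ q' ∈ I n, (if q' = q then p^3 else 0) = p^3 := by
      rw [Finset.sum_ite_eq' (I n) q (fun _ => p^3), if_pos hq]
    have e2 : ∑ q' ∈ I n, (if q' ≠ q ∧ ¬ Disjoint (Tq q) (Tq q') then p^5 else 0)
        ≤ p^5 * ((n / (ra n + 1) + 2 * rb n : ℕ):ℝ) := by
      rw [Finset.sum_ite, Finset.sum_const_zero, add_zero, Finset.sum_const, nsmul_eq_mul]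
      have hc := overlap_count hn hq
      have : (((I n).filter fun q' => q' ≠ q ∧ ¬ Disjoint (Tq q) (Tq q')).card : ℝ)
          ≤ ((n / (ra n + 1) + 2 * rb n : ℕ):ℝ) := by exact_mod_cast hc
      calc (((I n).filter fun q' => q' ≠ q ∧ ¬ Disjoint (Tq q) (Tq q')).card : ℝ) * p^5
          ≤ ((n / (ra n + 1) + 2 * rb n : ℕ):ℝ) * p^5 :=
            mul_le_mul_of_nonneg_right this (pow_nonneg hp.1 5)
        _ = p^5 * ((n / (ra n + 1) + 2 * rb n : ℕ):ℝ) := mul_comm _ _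
    have e3 : ∑ _q' ∈ I n, p^6 = ((I n).card : ℝ) * p^6 := by
      rw [Finset.sum_const, nsmul_eq_mul]
    rw [e1, e3]
    have := e2
    linarith
  calc ∑ q ∈ I n, ∑ q' ∈ I n, p ^ (Tq q ∪ Tq q').card
      ≤ ∑ _q ∈ I n, (p^3 + p^5 * ((n / (ra n + 1) + 2 * rb n : ℕ):ℝ)
          + p^6 * ((I n).card:ℝ)) := Finset.sum_le_sum inner
    _ = ((I n).card : ℝ) * (p^3 + p^5 * ((n / (ra n + 1) + 2 * rb n : ℕ):ℝ)
          + p^6 * ((I n).card:ℝ)) := by rw [Finset.sum_const, nsmul_eq_mul]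
    _ = p^3 * ((I n).card:ℝ)
        + p^5 * (((I n).card:ℝ) * ((n / (ra n + 1) + 2 * rb n : ℕ):ℝ))
        + p^6 * ((I n).card:ℝ)^2 := by ring

lemma mu_eq {n : ℕ} (hn : 2 ≤ n) (p : ℝ) :
    ∑ q ∈ I n, p ^ (Tq q).card = p^3 * ((I n).card : ℝ) := by
  rw [Finset.sum_congr rfl (fun q hq => by rw [card_Tq_three hn hq]), Finset.sum_const,
    nsmul_eq_mul, mul_comm]

lemma card_I_ge {n : ℕ} (hn : 2 ≤ n) (hlog : 80 ≤ Real.log n) :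
    (1/20 : ℝ) * ((n:ℝ) * Real.log n) ≤ ((I n).card : ℝ) := by
  have hn1 : 1 ≤ n := by omega
  have hnR : (1:ℝ) ≤ (n:ℝ) := by exact_mod_cast hn1
  have hnpos : (0:ℝ) < (n:ℝ) := by linarith
  have hra1 : 1 ≤ ra n := one_le_ra hn1
  have hsq : Real.sqrt n * Real.sqrt n = (n:ℝ) := Real.mul_self_sqrt (by positivity)
  have hrarb : ra n ≤ rb n := by
    have h1 : (ra n : ℝ) ≤ Real.sqrt n := by
      refine ra_le.trans ?_
      rw [Real.sqrt_eq_rpow]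
      exact Real.rpow_le_rpow_of_exponent_le hnR (by norm_num)
    have h2 : ra n * ra n ≤ n := by
      have : ((ra n * ra n : ℕ) : ℝ) ≤ (n:ℝ) := by
        push_cast
        nlinarith [Real.sqrt_nonneg (n:ℝ)]
      exact_mod_cast this
    exact Nat.le_sqrt.mpr h2
  -- card formula
  have hcard : (I n).card = ∑ a ∈ Finset.Ioc (ra n) (rb n), (n / a - rb n) := by
    unfold I
    rw [Finset.card_sigma]
    exact Finset.sum_congr rfl fun a ha => by rw [Nat.card_Ioc]
  have hpoint : ∀ a ∈ Finset.Ioc (ra n) (rb n),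
      (n:ℝ) * (a:ℝ)⁻¹ - (1 + (rb n : ℝ)) ≤ ((n / a - rb n : ℕ) : ℝ) := by
    intro a ha
    rw [Finset.mem_Ioc] at ha
    have hapos : 0 < a := by omega
    have haR : (0:ℝ) < (a:ℝ) := by exact_mod_cast hapos
    have d1 : (n:ℝ) * (a:ℝ)⁻¹ - 1 ≤ ((n / a : ℕ):ℝ) := by
      have hmod : a * (n / a) + n % a = n := Nat.div_add_mod n a
      have hlt : n % a < a := Nat.mod_lt n hapos
      have : (n:ℝ) < (a:ℝ) * ((n / a : ℕ):ℝ) + (a:ℝ) := by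
        have : ((a * (n / a) + a : ℕ) : ℝ) = (a:ℝ) * ((n / a : ℕ):ℝ) + (a:ℝ) := by push_cast; ring
        rw [← this]
        exact_mod_cast (by omega : n < a * (n / a) + a)
      rw [sub_le_iff_le_add]
      rw [mul_inv_le_iff₀ haR]  -- (n:ℝ) ≤ (↑(n/a) + 1) * a
      nlinarith
    have d2 : ((n / a : ℕ):ℝ) - (rb n : ℝ) ≤ ((n / a - rb n : ℕ) : ℝ) := by
      rcases le_or_gt (rb n) (n / a) with h | h
      · rw [Nat.cast_sub h]
      · have : n / a - rb n = 0 := by omega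
        rw [this]
        have : ((n/a : ℕ):ℝ) < (rb n : ℝ) := by exact_mod_cast h
        simp only [Nat.cast_zero]
        linarith
    linarith
  have hsum1 : ∑ a ∈ Finset.Ioc (ra n) (rb n), ((n:ℝ) * (a:ℝ)⁻¹ - (1 + (rb n : ℝ)))
      ≤ ((I n).card : ℝ) := by
    rw [hcard]
    push_cast
    exact Finset.sum_le_sum hpoint
  have hsum2 : ∑ a ∈ Finset.Ioc (ra n) (rb n), ((n:ℝ) * (a:ℝ)⁻¹ - (1 + (rb n : ℝ)))
      = (n:ℝ) * (∑ a ∈ Finset.Ioc (ra n) (rb n), (a:ℝ)⁻¹)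
        - ((rb n - ra n : ℕ):ℝ) * (1 + (rb n : ℝ)) := by
    rw [Finset.sum_sub_distrib, ← Finset.mul_sum, Finset.sum_const, nsmul_eq_mul, Nat.card_Ioc]
  have hharm : Real.log (rb n + 1) - 1 - Real.log (ra n)
      ≤ ∑ a ∈ Finset.Ioc (ra n) (rb n), (a:ℝ)⁻¹ := by
    have := sum_Ioc_inv_ge hra1 hrarb
    simpa using this
  have hlog1 : (1/2 : ℝ) * Real.log n ≤ Real.log (rb n + 1) := by
    have hls : Real.log (Real.sqrt n) = Real.log n / 2 := Real.log_sqrt (le_of_lt hnpos)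
    calc (1/2 : ℝ) * Real.log n = Real.log (Real.sqrt n) := by rw [hls]; ring
      _ ≤ Real.log (rb n + 1) :=
          Real.log_le_log (Real.sqrt_pos.mpr hnpos) (sqrt_lt_rb_add_one n).le
  have hlog2 : Real.log (ra n) ≤ (2/5 : ℝ) * Real.log n := by
    rw [← Real.log_rpow hnpos]
    refine Real.log_le_log ?_ ra_le
    exact_mod_cast hra1
  have hIoc : ((rb n - ra n : ℕ):ℝ) * (1 + (rb n : ℝ)) ≤ 2 * (n:ℝ) := by
    have h1 : ((rb n - ra n : ℕ):ℝ) ≤ (rb n : ℝ) := by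
      have : rb n - ra n ≤ rb n := by omega
      exact_mod_cast this
    have h2 : (rb n : ℝ) ≤ Real.sqrt n := nat_sqrt_le_real n
    have hs1 : (1:ℝ) ≤ Real.sqrt n := by
      rw [show (1:ℝ) = Real.sqrt 1 by rw [Real.sqrt_one]]
      exact Real.sqrt_le_sqrt hnR
    have h3 : Real.sqrt n ≤ (n:ℝ) := by nlinarith
    have h0 : (0:ℝ) ≤ ((rb n - ra n : ℕ):ℝ) := by positivity
    nlinarith
  -- final assembly
  set L := Real.log n with hL
  set s := ∑ a ∈ Finset.Ioc (ra n) (rb n), (a:ℝ)⁻¹ with hs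
  have hsge : (1/10 : ℝ) * L - 1 ≤ s := by
    have := hharm
    linarith
  have hns : (n:ℝ) * ((1/10 : ℝ) * L - 1) ≤ (n:ℝ) * s :=
    mul_le_mul_of_nonneg_left hsge (by positivity)
  have h80 : (n:ℝ) * 80 ≤ (n:ℝ) * L := mul_le_mul_of_nonneg_left hlog (by positivity)
  have hcardge : (n:ℝ) * s - 2 * (n:ℝ) ≤ ((I n).card : ℝ) := by
    rw [hsum2] at hsum1
    linarith
  nlinarith


lemma dir2_bound {n : ℕ} (hn : 2 ≤ n) (hlog : 80 ≤ Real.log n) {p : ℝ}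
    (hp : p ∈ Set.Icc (0:ℝ) 1) (hp0 : 0 < p) :
    randProb n p (fun A => ¬ ∃ a ∈ A, ∃ b ∈ A, a * b ∈ A)
      ≤ 20 / (p^3 * ((n:ℝ) * Real.log n))
        + 60 * (n:ℝ) ^ ((3:ℝ)/5) / (p * ((n:ℝ) * Real.log n)) := by
  classical
  have hnR : (1:ℝ) ≤ (n:ℝ) := by exact_mod_cast (by omega : 1 ≤ n)
  have hnpos : (0:ℝ) < (n:ℝ) := by linarith
  have hNL : (0:ℝ) < (n:ℝ) * Real.log n := by nlinarith
  set C : ℝ := ((I n).card : ℝ) with hC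
  have hCge : (1/20 : ℝ) * ((n:ℝ) * Real.log n) ≤ C := card_I_ge hn hlog
  have hCpos : 0 < C := by nlinarith
  set μ : ℝ := p^3 * C with hμ
  have hμpos : 0 < μ := by positivity
  have hcheb := chebyshev hp (I n) Tq
    (fun q hq => Tq_subset (I_sub_Pairs hn hq))
    (P := fun A => ∃ a ∈ A, ∃ b ∈ A, a * b ∈ A)
    (fun A hA => by
      obtain ⟨q, hq, hsub⟩ := hA
      refine ⟨q.1, hsub ?_, q.2, hsub ?_, hsub ?_⟩ <;>
        simp [Tq])
    μ (by rw [hμ, mu_eq hn]) hμpos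
  have hvar := var_sum_le hn hp
  set K : ℝ := ((n / (ra n + 1) + 2 * rb n : ℕ):ℝ) with hK
  have hKnn : 0 ≤ K := by positivity
  have hnum : (∑ q ∈ I n, ∑ q' ∈ I n, p ^ ((Tq q ∪ Tq q').card)) - μ^2
      ≤ p^3 * C + p^5 * (C * K) := by
    have : μ^2 = p^6 * C^2 := by rw [hμ]; ring
    rw [this]
    linarith
  have hKle : K ≤ 3 * (n:ℝ) ^ ((3:ℝ)/5) := by
    have h1 : ((n / (ra n + 1) : ℕ):ℝ) ≤ (n:ℝ) / ((ra n : ℝ) + 1) := by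
      have := Nat.cast_div_le (α := ℝ) (m := n) (n := ra n + 1)
      push_cast at this ⊢
      exact this
    have hra := lt_ra_add_one n
    have hrapos : (0:ℝ) < (n:ℝ) ^ ((2:ℝ)/5) := by positivity
    have h2 : (n:ℝ) / ((ra n : ℝ) + 1) ≤ (n:ℝ) / (n:ℝ) ^ ((2:ℝ)/5) := by
      refine div_le_div_of_nonneg_left (by positivity) hrapos hra.le
    have h3 : (n:ℝ) / (n:ℝ) ^ ((2:ℝ)/5) = (n:ℝ) ^ ((3:ℝ)/5) := by
      rw [show ((3:ℝ)/5) = 1 - (2:ℝ)/5 by norm_num, Real.rpow_sub hnpos, Real.rpow_one]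
    have h4 : ((rb n : ℕ):ℝ) ≤ (n:ℝ) ^ ((3:ℝ)/5) := by
      have := nat_sqrt_le_real n
      have h5 : Real.sqrt n = (n:ℝ) ^ ((1:ℝ)/2) := Real.sqrt_eq_rpow n
      have h6 : (n:ℝ) ^ ((1:ℝ)/2) ≤ (n:ℝ) ^ ((3:ℝ)/5) :=
        Real.rpow_le_rpow_of_exponent_le hnR (by norm_num)
      calc ((rb n : ℕ):ℝ) ≤ Real.sqrt n := this
        _ = (n:ℝ) ^ ((1:ℝ)/2) := h5
        _ ≤ (n:ℝ) ^ ((3:ℝ)/5) := h6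
    rw [hK]
    push_cast
    linarith [h1.trans (h2.trans_eq h3), h4]
  have hfrac : (p^3 * C + p^5 * (C * K)) / μ^2 = 1/(p^3 * C) + K/(p * C) := by
    rw [hμ]
    field_simp
  have main : randProb n p (fun A => ¬ ∃ a ∈ A, ∃ b ∈ A, a * b ∈ A)
      ≤ 1/(p^3 * C) + K/(p * C) := by
    refine hcheb.trans ?_
    rw [← hfrac]
    exact div_le_div_of_nonneg_right hnum (by positivity)
  refine main.trans ?_
  have t1 : 1/(p^3 * C) ≤ 20 / (p^3 * ((n:ℝ) * Real.log n)) := by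
    rw [div_le_div_iff₀ (by positivity) (by positivity)]
    nlinarith [pow_pos hp0 3]
  have t2 : K/(p * C) ≤ 60 * (n:ℝ) ^ ((3:ℝ)/5) / (p * ((n:ℝ) * Real.log n)) := by
    rw [div_le_div_iff₀ (by positivity) (by positivity)]
    have h5 : K * (p * ((n:ℝ)*Real.log n)) ≤ 3*(n:ℝ)^((3:ℝ)/5) * (p * ((n:ℝ)*Real.log n)) :=
      mul_le_mul_of_nonneg_right hKle (by positivity)
    have h6 : 3*(n:ℝ)^((3:ℝ)/5) * (p * ((n:ℝ)*Real.log n))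
        = 60 * (n:ℝ)^((3:ℝ)/5) * (p * ((1/20)*((n:ℝ)*Real.log n))) := by ring
    have h7 : 60 * (n:ℝ)^((3:ℝ)/5) * (p * ((1/20)*((n:ℝ)*Real.log n)))
        ≤ 60 * (n:ℝ)^((3:ℝ)/5) * (p * C) := by
      refine mul_le_mul_of_nonneg_left ?_ (by positivity)
      exact mul_le_mul_of_nonneg_left hCge hp0.le
    linarith
  linarith


lemma dir2 (p : ℕ → ℝ) (hp : ∀ n, p n ∈ Set.Icc (0:ℝ) 1)
    (ht : Tendsto (fun n : ℕ => p n * ((n : ℝ) * Real.log n) ^ ((1:ℝ)/3)) atTop atTop) :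
    Tendsto (fun n : ℕ => randProb n (p n) (fun A => ∃ a ∈ A, ∃ b ∈ A, a * b ∈ A))
      atTop (nhds 1) := by
  set t : ℕ → ℝ := fun n => p n * ((n : ℝ) * Real.log n) ^ ((1:ℝ)/3) with htdef
  have key : ∀ n : ℕ, 3 ≤ n → 80 ≤ Real.log n → 1 ≤ t n →
      randProb n (p n) (fun A => ¬ ∃ a ∈ A, ∃ b ∈ A, a * b ∈ A) ≤ 80 / t n := by
    intro n hn hlog htn
    have hnR : (1:ℝ) ≤ (n:ℝ) := by exact_mod_cast (by omega : 1 ≤ n)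
    have hnpos : (0:ℝ) < (n:ℝ) := by linarith
    have hL1 : (1:ℝ) ≤ Real.log n := by linarith
    have hNL : (0:ℝ) < (n:ℝ) * Real.log n := by nlinarith
    have hX : (0:ℝ) < ((n:ℝ) * Real.log n) ^ ((1:ℝ)/3) := Real.rpow_pos_of_pos hNL _
    have hp0 : 0 < p n := by
      by_contra hc
      push_neg at hc
      have : t n ≤ 0 := mul_nonpos_of_nonpos_of_nonneg hc hX.le
      linarith
    have htpos : 0 < t n := by linarith
    refine (dir2_bound (by omega) hlog (hp n) hp0).trans ?_
    have hcube : t n ^ 3 = p n ^ 3 * ((n:ℝ) * Real.log n) := by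
      rw [htdef]
      simp only [mul_pow]
      congr 1
      rw [← Real.rpow_natCast (((n:ℝ) * Real.log n) ^ ((1:ℝ)/3)) 3, ← Real.rpow_mul hNL.le]
      norm_num
    have s1 : 20 / (p n ^3 * ((n:ℝ) * Real.log n)) ≤ 20 / t n := by
      rw [← hcube]
      refine div_le_div_of_nonneg_left (by norm_num) htpos ?_
      have h1 : 1 ≤ t n * t n := by nlinarith
      nlinarith [mul_nonneg htpos.le (sub_nonneg.mpr h1)]
    have hkey : (n:ℝ) ^ ((3:ℝ)/5) * (((n:ℝ) * Real.log n) ^ ((1:ℝ)/3)) ≤ (n:ℝ) * Real.log n := by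
      have e1 : (n:ℝ) * Real.log n
          = ((n:ℝ) * Real.log n) ^ ((1:ℝ)/3) * ((n:ℝ) * Real.log n) ^ ((2:ℝ)/3) := by
        rw [← Real.rpow_add hNL]
        norm_num
      have e2 : (n:ℝ) ^ ((3:ℝ)/5) ≤ ((n:ℝ) * Real.log n) ^ ((2:ℝ)/3) := by
        rw [Real.mul_rpow hnpos.le (by linarith)]
        calc (n:ℝ) ^ ((3:ℝ)/5) ≤ (n:ℝ) ^ ((2:ℝ)/3) :=
              Real.rpow_le_rpow_of_exponent_le hnR (by norm_num)
          _ ≤ (n:ℝ) ^ ((2:ℝ)/3) * Real.log n ^ ((2:ℝ)/3) := by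
              nth_rewrite 1 [← mul_one ((n:ℝ) ^ ((2:ℝ)/3))]
              refine mul_le_mul_of_nonneg_left ?_ (by positivity)
              calc (1:ℝ) = 1 ^ ((2:ℝ)/3) := by norm_num
                _ ≤ Real.log n ^ ((2:ℝ)/3) := Real.rpow_le_rpow (by norm_num) hL1 (by norm_num)
      calc (n:ℝ) ^ ((3:ℝ)/5) * (((n:ℝ) * Real.log n) ^ ((1:ℝ)/3))
          ≤ ((n:ℝ) * Real.log n) ^ ((2:ℝ)/3) * (((n:ℝ) * Real.log n) ^ ((1:ℝ)/3)) :=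
            mul_le_mul_of_nonneg_right e2 hX.le
        _ = (n:ℝ) * Real.log n := by rw [mul_comm, ← e1]
    have s2 : 60 * (n:ℝ) ^ ((3:ℝ)/5) / (p n * ((n:ℝ) * Real.log n)) ≤ 60 / t n := by
      rw [div_le_div_iff₀ (by positivity) htpos]
      rw [htdef]
      calc 60 * (n:ℝ) ^ ((3:ℝ)/5) * (p n * ((n:ℝ) * Real.log n) ^ ((1:ℝ)/3))
          = 60 * p n * ((n:ℝ) ^ ((3:ℝ)/5) * ((n:ℝ) * Real.log n) ^ ((1:ℝ)/3)) := by ring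
        _ ≤ 60 * p n * ((n:ℝ) * Real.log n) := by
            refine mul_le_mul_of_nonneg_left hkey (by positivity)
        _ = 60 * (p n * ((n:ℝ) * Real.log n)) := by ring
    calc 20 / (p n ^3 * ((n:ℝ) * Real.log n))
          + 60 * (n:ℝ) ^ ((3:ℝ)/5) / (p n * ((n:ℝ) * Real.log n))
        ≤ 20 / t n + 60 / t n := add_le_add s1 s2
      _ = 80 / t n := by ring
  have hlogev : ∀ᶠ n : ℕ in atTop, 80 ≤ Real.log n := by
    have hlt : Tendsto (fun n : ℕ => Real.log n) atTop atTop :=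
      Real.tendsto_log_atTop.comp tendsto_natCast_atTop_atTop
    exact hlt.eventually_ge_atTop 80
  have htev : ∀ᶠ n : ℕ in atTop, 1 ≤ t n := ht.eventually_ge_atTop 1
  have h0 : Tendsto (fun n : ℕ => randProb n (p n) (fun A => ¬ ∃ a ∈ A, ∃ b ∈ A, a * b ∈ A))
      atTop (nhds 0) := by
    have hub : Tendsto (fun n : ℕ => 80 / t n) atTop (nhds 0) :=
      Tendsto.div_atTop tendsto_const_nhds ht
    refine tendsto_of_tendsto_of_tendsto_of_le_of_le' tendsto_const_nhds hub ?_ ?_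
    · exact Eventually.of_forall fun n => randProb_nonneg (hp n) n _
    · filter_upwards [eventually_ge_atTop 3, hlogev, htev] with n h1 h2 h3
      exact key n h1 h2 h3
  have : Tendsto (fun n : ℕ =>
      1 - randProb n (p n) (fun A => ¬ ∃ a ∈ A, ∃ b ∈ A, a * b ∈ A)) atTop (nhds 1) := by
    have := tendsto_const_nhds (x := (1:ℝ)) (f := atTop (α := ℕ))
    simpa using this.sub h0
  refine this.congr fun n => ?_
  have := randProb_compl (p := p n) n (fun A => ∃ a ∈ A, ∃ b ∈ A, a * b ∈ A)
  linarith


end Stmt16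

/-- The threshold for `[2,n]_p` to contain a product Schur triple is `(n log n)^{-1/3}`. -/
theorem stmt16 :
    (∀ p : ℕ → ℝ, (∀ n, p n ∈ Set.Icc (0 : ℝ) 1) →
      Filter.Tendsto (fun n : ℕ => p n * ((n : ℝ) * Real.log n) ^ ((1 : ℝ) / 3))
        Filter.atTop (nhds 0) →
      Filter.Tendsto (fun n : ℕ => randProb n (p n) (fun A => ∃ a ∈ A, ∃ b ∈ A, a * b ∈ A))
        Filter.atTop (nhds 0)) ∧
    (∀ p : ℕ → ℝ, (∀ n, p n ∈ Set.Icc (0 : ℝ) 1) →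
      Filter.Tendsto (fun n : ℕ => p n * ((n : ℝ) * Real.log n) ^ ((1 : ℝ) / 3))
        Filter.atTop Filter.atTop →
      Filter.Tendsto (fun n : ℕ => randProb n (p n) (fun A => ∃ a ∈ A, ∃ b ∈ A, a * b ∈ A))
        Filter.atTop (nhds 1)) := by
  exact ⟨Stmt16.dir1, Stmt16.dir2⟩
end
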